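/- arXiv:2104.07710 — 2 statements merged into one kernel-verified Lean document; each statement's English description precedes it below -/
import Mathlib

section
/- Let P, Q be persistence diagrams (finite multisets of points strictly above the diagonal in ℝ²) with the property that distinct points are at distance ≥ 1 and each point is at distance ≥ 1 from the diagonal. Consider a quadtree with grids G_{-1}, G_0, ..., G_{log Δ} of cell side lengths 1/2, 1, 2, ..., and the modified L₁ distance |V^P − V^Q|_T = Σ_i 2^i Σ_k |p_k − q_k|_T where coordinates corresponding to cells intersecting the diagonal contribute 0. Then there is a constant C (one may take C = 2√2) such that the 1-Wasserstein distance between P and Q satisfies d_W(P,Q) ≤ C·|V^P − V^Q|_T. -/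
noncomputable section
open Finset Classical

/-- Points in the plane with the Euclidean norm. -/
abbrev Pt := EuclideanSpace ℝ (Fin 2)

/-- Orthogonal projection onto the diagonal line `y = x`. -/
def proj (p : Pt) : Pt := WithLp.toLp 2 (fun _ => (p 0 + p 1) / 2)

/-- Number of points of the (indexed) multiset `P` lying in the grid cell
`[a·s, (a+1)·s) × [b·s, (b+1)·s)` of side length `s`. -/
def cellCount {ι : Type*} [Fintype ι] (P : ι → Pt) (s : ℝ) (a b : ℕ) : ℕ :=
  (Finset.univ.filter fun i =>
    (a : ℝ) * s ≤ P i 0 ∧ P i 0 < ((a : ℝ) + 1) * s ∧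
    (b : ℝ) * s ≤ P i 1 ∧ P i 1 < ((b : ℝ) + 1) * s).card

/-- The modified `L₁` distance `|V^P - V^Q|_T` over the dyadic quadtree grids
`G_{-1}, G_0, …, G_L` of cell side lengths `1/2, 1, 2, …, 2^L` covering `[0, 2^L)²`
(level `i = j - 1` for `j = 0, …, L+1`, of side `2^j / 2`): coordinates of terminal
cells — exactly those with `a = b`, the cells intersecting the diagonal `y = x` —
contribute `0`. -/
def modL1 (L : ℕ) {ι κ : Type*} [Fintype ι] [Fintype κ] (P : ι → Pt) (Q : κ → Pt) : ℝ :=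
  ∑ j ∈ range (L + 2), ((2 : ℝ) ^ j / 2) *
    ∑ a ∈ range (2 ^ (L + 1 - j)), ∑ b ∈ range (2 ^ (L + 1 - j)),
      if a = b then 0
      else |(cellCount P ((2 : ℝ) ^ j / 2) a b : ℝ) - (cellCount Q ((2 : ℝ) ^ j / 2) a b : ℝ)|

/-- The ordinary (unmodified) `L₁` distance `‖V^P - V^Q‖₁` between the quadtree count
vectors, over the same grids. -/
def fullL1 (L : ℕ) {ι κ : Type*} [Fintype ι] [Fintype κ] (P : ι → Pt) (Q : κ → Pt) : ℝ :=
  ∑ j ∈ range (L + 2), ((2 : ℝ) ^ j / 2) *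
    ∑ a ∈ range (2 ^ (L + 1 - j)), ∑ b ∈ range (2 ^ (L + 1 - j)),
      |(cellCount P ((2 : ℝ) ^ j / 2) a b : ℝ) - (cellCount Q ((2 : ℝ) ^ j / 2) a b : ℝ)|

/-- An augmented matching between two indexed multisets of points: each left point is
either matched to a right point (injectively) or to its diagonal projection; right
points not in the image are matched to their diagonal projections. -/
structure AugMatching (m n : ℕ) where
  σ : Fin m → Option (Fin n)
  inj : ∀ i i' j, σ i = some j → σ i' = some j → i = i'

/-- The total Euclidean cost of an augmented matching. -/
def matchCost {m n : ℕ} (P : Fin m → Pt) (Q : Fin n → Pt) (M : AugMatching m n) : ℝ :=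
  (∑ i, (M.σ i).elim (dist (P i) (proj (P i))) (fun j => dist (P i) (Q j))) +
    ∑ j, if ∃ i, M.σ i = some j then 0 else dist (Q j) (proj (Q j))

/-- The 1-Wasserstein distance between two persistence diagrams: the infimum of the
cost over all augmented matchings. -/
def dW {m n : ℕ} (P : Fin m → Pt) (Q : Fin n → Pt) : ℝ :=
  sInf {c | ∃ M : AugMatching m n, matchCost P Q M = c}

-- Part 1: basic dW lemmas
lemma matchCost_nonneg {m n : ℕ} (P : Fin m → Pt) (Q : Fin n → Pt) (M : AugMatching m n) :
    0 ≤ matchCost P Q M := by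
  unfold matchCost
  apply add_nonneg
  · exact Finset.sum_nonneg fun i _ => by cases h : M.σ i <;> simp [h, dist_nonneg]
  · exact Finset.sum_nonneg fun j _ => by split <;> simp [dist_nonneg]

def costSet {m n : ℕ} (P : Fin m → Pt) (Q : Fin n → Pt) : Set ℝ :=
  {c | ∃ M : AugMatching m n, matchCost P Q M = c}

lemma costSet_nonempty {m n : ℕ} (P : Fin m → Pt) (Q : Fin n → Pt) :
    (costSet P Q).Nonempty :=
  ⟨_, ⟨⟨fun _ => none, by simp⟩, rfl⟩⟩

lemma costSet_bddBelow {m n : ℕ} (P : Fin m → Pt) (Q : Fin n → Pt) :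
    BddBelow (costSet P Q) :=
  ⟨0, fun c hc => by obtain ⟨M, rfl⟩ := hc; exact matchCost_nonneg P Q M⟩

lemma dW_le_matchCost {m n : ℕ} (P : Fin m → Pt) (Q : Fin n → Pt) (M : AugMatching m n) :
    dW P Q ≤ matchCost P Q M :=
  csInf_le (costSet_bddBelow P Q) ⟨M, rfl⟩

lemma dW_le_of_forall {m n : ℕ} (P : Fin m → Pt) (Q : Fin n → Pt) (d : ℝ)
    {m' n' : ℕ} (P' : Fin m' → Pt) (Q' : Fin n' → Pt)
    (h : ∀ M' : AugMatching m' n', dW P Q ≤ d + matchCost P' Q' M') :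
    dW P Q ≤ d + dW P' Q' := by
  have : dW P Q - d ≤ dW P' Q' := by
    apply le_csInf (costSet_nonempty P' Q')
    rintro c ⟨M', rfl⟩
    linarith [h M']
  linarith

lemma dW_empty (P : Fin 0 → Pt) (Q : Fin 0 → Pt) : dW P Q ≤ 0 := by
  have := dW_le_matchCost P Q ⟨fun i => none, by simp⟩
  simpa [matchCost] using this
-- Part 2: extension lemmas
lemma dW_extend_pair {m n : ℕ} (P : Fin (m+1) → Pt) (Q : Fin (n+1) → Pt)
    (i : Fin (m+1)) (j : Fin (n+1)) :
    dW P Q ≤ dist (P i) (Q j) + dW (P ∘ i.succAbove) (Q ∘ j.succAbove) := by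
  apply dW_le_of_forall
  intro M'
  set M : AugMatching (m+1) (n+1) :=
    ⟨i.insertNth (some j) (fun k => (M'.σ k).map j.succAbove), by
      intro u u' j0 hu hu'
      by_cases h : u = i
      · by_cases h' : u' = i
        · rw [h, h']
        · exfalso
          obtain ⟨k', rfl⟩ := Fin.exists_succAbove_eq h'
          rw [h, Fin.insertNth_apply_same] at hu
          rw [Fin.insertNth_apply_succAbove] at hu'
          obtain ⟨c', hc', hcc'⟩ := Option.map_eq_some_iff.mp hu'
          obtain rfl : j = j0 := Option.some_injective _ hu
          exact Fin.succAbove_ne j c' hcc'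
      · obtain ⟨k, rfl⟩ := Fin.exists_succAbove_eq h
        by_cases h' : u' = i
        · exfalso
          rw [h', Fin.insertNth_apply_same] at hu'
          rw [Fin.insertNth_apply_succAbove] at hu
          obtain ⟨c, hc, hcc⟩ := Option.map_eq_some_iff.mp hu
          obtain rfl : j = j0 := Option.some_injective _ hu'
          exact Fin.succAbove_ne j c hcc
        · obtain ⟨k', rfl⟩ := Fin.exists_succAbove_eq h'
          rw [Fin.insertNth_apply_succAbove] at hu hu'
          obtain ⟨c, hc, hcc⟩ := Option.map_eq_some_iff.mp hu
          obtain ⟨c', hc', hcc'⟩ := Option.map_eq_some_iff.mp hu'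
          have : c = c' := Fin.succAbove_right_injective (p := j) (hcc.trans hcc'.symm)
          subst this
          exact congrArg _ (M'.inj k k' c hc hc')⟩
  refine le_trans (dW_le_matchCost P Q M) (le_of_eq ?_)
  unfold matchCost
  have h1 : (∑ u, (M.σ u).elim (dist (P u) (proj (P u))) (fun j' => dist (P u) (Q j')))
      = dist (P i) (Q j) +
        ∑ k, (M'.σ k).elim (dist ((P ∘ i.succAbove) k) (proj ((P ∘ i.succAbove) k)))
          (fun j' => dist ((P ∘ i.succAbove) k) ((Q ∘ j.succAbove) j')) := by
    rw [Fin.sum_univ_succAbove _ i]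
    congr 1
    · simp [M, Fin.insertNth_apply_same]
    · apply Finset.sum_congr rfl
      intro k _
      simp only [M, Fin.insertNth_apply_succAbove]
      cases h : M'.σ k <;> simp [h, Function.comp]
  have h2 : (∑ j', if ∃ u, M.σ u = some j' then 0 else dist (Q j') (proj (Q j')))
      = ∑ k, if ∃ u, M'.σ u = some k then 0
          else dist ((Q ∘ j.succAbove) k) (proj ((Q ∘ j.succAbove) k)) := by
    rw [Fin.sum_univ_succAbove _ j]
    have hj : ∃ u, M.σ u = some j := ⟨i, by simp [M, Fin.insertNth_apply_same]⟩
    rw [if_pos hj, zero_add]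
    apply Finset.sum_congr rfl
    intro k _
    have heqv : (∃ u, M.σ u = some (j.succAbove k)) ↔ ∃ u, M'.σ u = some k := by
      constructor
      · rintro ⟨u, hu⟩
        simp only [M] at hu
        by_cases h : u = i
        · exfalso
          rw [h, Fin.insertNth_apply_same] at hu
          exact Fin.succAbove_ne j k (Option.some_injective _ hu).symm
        · obtain ⟨k', rfl⟩ := Fin.exists_succAbove_eq h
          rw [Fin.insertNth_apply_succAbove] at hu
          obtain ⟨c, hc, hcc⟩ := Option.map_eq_some_iff.mp hu
          have : c = k := Fin.succAbove_right_injective (p := j) hcc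
          exact ⟨k', this ▸ hc⟩
      · rintro ⟨u, hu⟩
        exact ⟨i.succAbove u, by simp [M, Fin.insertNth_apply_succAbove, hu]⟩
    simp only [Function.comp_apply]
    rw [if_congr heqv rfl rfl]
  rw [h1, h2]; ring

lemma dW_extend_diagP {m n : ℕ} (P : Fin (m+1) → Pt) (Q : Fin n → Pt) (i : Fin (m+1)) :
    dW P Q ≤ dist (P i) (proj (P i)) + dW (P ∘ i.succAbove) Q := by
  apply dW_le_of_forall
  intro M'
  set M : AugMatching (m+1) n :=
    ⟨i.insertNth none M'.σ, by
      intro u u' j0 hu hu'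
      by_cases h : u = i
      · rw [h, Fin.insertNth_apply_same] at hu; exact absurd hu (by simp)
      · obtain ⟨k, rfl⟩ := Fin.exists_succAbove_eq h
        by_cases h' : u' = i
        · rw [h', Fin.insertNth_apply_same] at hu'; exact absurd hu' (by simp)
        · obtain ⟨k', rfl⟩ := Fin.exists_succAbove_eq h'
          rw [Fin.insertNth_apply_succAbove] at hu hu'
          exact congrArg _ (M'.inj k k' j0 hu hu')⟩
  refine le_trans (dW_le_matchCost P Q M) (le_of_eq ?_)
  unfold matchCost
  have h1 : (∑ u, (M.σ u).elim (dist (P u) (proj (P u))) (fun j' => dist (P u) (Q j')))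
      = dist (P i) (proj (P i)) +
        ∑ k, (M'.σ k).elim (dist ((P ∘ i.succAbove) k) (proj ((P ∘ i.succAbove) k)))
          (fun j' => dist ((P ∘ i.succAbove) k) (Q j')) := by
    rw [Fin.sum_univ_succAbove _ i]
    congr 1
    · simp [M, Fin.insertNth_apply_same]
    · apply Finset.sum_congr rfl
      intro k _
      simp only [M, Fin.insertNth_apply_succAbove, Function.comp_apply]
  have h2 : (∑ j', if ∃ u, M.σ u = some j' then 0 else dist (Q j') (proj (Q j')))
      = ∑ j', if ∃ u, M'.σ u = some j' then 0 else dist (Q j') (proj (Q j')) := by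
    apply Finset.sum_congr rfl
    intro k _
    have heqv : (∃ u, M.σ u = some k) ↔ ∃ u, M'.σ u = some k := by
      constructor
      · rintro ⟨u, hu⟩
        simp only [M] at hu
        by_cases h : u = i
        · rw [h, Fin.insertNth_apply_same] at hu; exact absurd hu (by simp)
        · obtain ⟨k', rfl⟩ := Fin.exists_succAbove_eq h
          rw [Fin.insertNth_apply_succAbove] at hu
          exact ⟨k', hu⟩
      · rintro ⟨u, hu⟩
        exact ⟨i.succAbove u, by simp [M, Fin.insertNth_apply_succAbove, hu]⟩
    rw [if_congr heqv rfl rfl]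
  rw [h1, h2]; ring

lemma dW_extend_diagQ {m n : ℕ} (P : Fin m → Pt) (Q : Fin (n+1) → Pt) (j : Fin (n+1)) :
    dW P Q ≤ dist (Q j) (proj (Q j)) + dW P (Q ∘ j.succAbove) := by
  apply dW_le_of_forall
  intro M'
  set M : AugMatching m (n+1) :=
    ⟨fun u => (M'.σ u).map j.succAbove, by
      intro u u' j0 hu hu'
      obtain ⟨c, hc, hcc⟩ := Option.map_eq_some_iff.mp hu
      obtain ⟨c', hc', hcc'⟩ := Option.map_eq_some_iff.mp hu'
      have : c = c' := Fin.succAbove_right_injective (p := j) (hcc.trans hcc'.symm)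
      exact M'.inj u u' c hc (this ▸ hc')⟩
  refine le_trans (dW_le_matchCost P Q M) (le_of_eq ?_)
  unfold matchCost
  have h1 : (∑ u, (M.σ u).elim (dist (P u) (proj (P u))) (fun j' => dist (P u) (Q j')))
      = ∑ u, (M'.σ u).elim (dist (P u) (proj (P u)))
          (fun j' => dist (P u) ((Q ∘ j.succAbove) j')) := by
    apply Finset.sum_congr rfl
    intro u _
    cases h : M'.σ u <;> simp [M, h, Function.comp]
  have h2 : (∑ j', if ∃ u, M.σ u = some j' then 0 else dist (Q j') (proj (Q j')))
      = dist (Q j) (proj (Q j)) +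
        ∑ k, if ∃ u, M'.σ u = some k
          then 0 else dist ((Q ∘ j.succAbove) k) (proj ((Q ∘ j.succAbove) k)) := by
    rw [Fin.sum_univ_succAbove _ j]
    have hj : ¬ ∃ u, M.σ u = some j := by
      rintro ⟨u, hu⟩
      obtain ⟨c, hc, hcc⟩ := Option.map_eq_some_iff.mp hu
      exact Fin.succAbove_ne j c hcc
    rw [if_neg hj]
    congr 1
    apply Finset.sum_congr rfl
    intro k _
    have heqv : (∃ u, M.σ u = some (j.succAbove k)) ↔ ∃ u, M'.σ u = some k := by
      constructor
      · rintro ⟨u, hu⟩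
        simp only [M] at hu
        obtain ⟨c, hc, hcc⟩ := Option.map_eq_some_iff.mp hu
        have : c = k := Fin.succAbove_right_injective (p := j) hcc
        exact ⟨u, this ▸ hc⟩
      · rintro ⟨u, hu⟩
        exact ⟨u, by simp [M, hu]⟩
    simp only [Function.comp_apply]
    rw [if_congr heqv rfl rfl]
  rw [h1, h2]; ring
-- Part 3: grid machinery
def idx (x : ℝ) (j : ℕ) : ℕ := ⌊2 * x⌋₊ / 2 ^ j

lemma side_pos (j : ℕ) : (0:ℝ) < 2 ^ j / 2 := by positivity

lemma mem_cell_iff {x : ℝ} (hx : 0 ≤ x) (j a : ℕ) :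
    ((a : ℝ) * (2 ^ j / 2) ≤ x ∧ x < ((a : ℝ) + 1) * (2 ^ j / 2)) ↔ idx x j = a := by
  have hs : (0:ℝ) < 2 ^ j / 2 := side_pos j
  have hfl : ⌊x / (2 ^ j / 2)⌋₊ = idx x j := by
    have : x / ((2:ℝ) ^ j / 2) = (2 * x) / ((2 ^ j : ℕ) : ℝ) := by
      push_cast; field_simp
    rw [this, Nat.floor_div_natCast]
    rfl
  rw [← hfl]
  rw [Nat.floor_eq_iff (by positivity)]
  rw [le_div_iff₀ hs, div_lt_iff₀ hs]

lemma idx_lt {x : ℝ} (hx : 0 ≤ x) {L : ℕ} (hxL : x < 2 ^ L) {j : ℕ} (hj : j ≤ L + 1) :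
    idx x j < 2 ^ (L + 1 - j) := by
  have h1 : ⌊2 * x⌋₊ < 2 ^ (L + 1) := by
    apply Nat.floor_lt (by positivity) |>.mpr
    push_cast
    calc 2 * x < 2 * 2 ^ L := by linarith
    _ = 2 ^ (L + 1) := by ring
  rw [idx, Nat.div_lt_iff_lt_mul (by positivity)]
  calc ⌊2 * x⌋₊ < 2 ^ (L + 1) := h1
  _ = 2 ^ (L + 1 - j) * 2 ^ j := by rw [← pow_add]; congr 1; omega

lemma idx_shift (x : ℝ) {j j' : ℕ} (h : j ≤ j') : idx x j' = idx x j / 2 ^ (j' - j) := by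
  rw [idx, idx, Nat.div_div_eq_div_mul, ← pow_add]
  congr 2
  omega

def sameCell (x y : Pt) (j : ℕ) : Prop :=
  idx (x 0) j = idx (y 0) j ∧ idx (x 1) j = idx (y 1) j

def terminalAt (x : Pt) (j : ℕ) : Prop := idx (x 0) j = idx (x 1) j

lemma sameCell_mono {x y : Pt} {j j' : ℕ} (h : j ≤ j') (hs : sameCell x y j) :
    sameCell x y j' :=
  ⟨by rw [idx_shift _ h, idx_shift _ h, hs.1], by rw [idx_shift _ h, idx_shift _ h, hs.2]⟩

lemma terminalAt_mono {x : Pt} {j j' : ℕ} (h : j ≤ j') (hs : terminalAt x j) :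
    terminalAt x j' := by
  unfold terminalAt at *
  rw [idx_shift _ h, idx_shift _ h, hs]

lemma terminalAt_top {x : Pt} (L : ℕ) (h0 : 0 ≤ x 0) (h1 : 0 ≤ x 1)
    (hx0 : x 0 < 2 ^ L) (hx1 : x 1 < 2 ^ L) : terminalAt x (L + 1) := by
  have a0 := idx_lt h0 hx0 (le_refl (L+1))
  have a1 := idx_lt h1 hx1 (le_refl (L+1))
  simp only [Nat.sub_self, pow_zero, Nat.lt_one_iff] at a0 a1
  unfold terminalAt; rw [a0, a1]

lemma idx_interval {x : ℝ} (hx : 0 ≤ x) (j : ℕ) :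
    (idx x j : ℝ) * (2 ^ j / 2) ≤ x ∧ x < ((idx x j : ℝ) + 1) * (2 ^ j / 2) :=
  (mem_cell_iff hx j (idx x j)).mpr rfl

lemma dist_coords (x y : Pt) : dist x y = Real.sqrt ((x 0 - y 0) ^ 2 + (x 1 - y 1) ^ 2) := by
  rw [EuclideanSpace.dist_eq, Fin.sum_univ_two]
  simp [Real.dist_eq, sq_abs]

lemma sq_interval_aux {c s u v : ℝ} (hs : 0 < s) (h1 : c * s ≤ u) (h2 : u < (c + 1) * s)
    (h3 : c * s ≤ v) (h4 : v < (c + 1) * s) : (u - v) ^ 2 ≤ s ^ 2 := by nlinarith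

lemma dist_le_of_sameCell {x y : Pt} (hx0 : 0 ≤ x 0) (hx1 : 0 ≤ x 1)
    (hy0 : 0 ≤ y 0) (hy1 : 0 ≤ y 1) {j : ℕ} (h : sameCell x y j) :
    dist x y ≤ (2 ^ j / 2) * Real.sqrt 2 := by
  set s : ℝ := 2 ^ j / 2 with hs
  have hspos : (0:ℝ) < s := side_pos j
  obtain ⟨e0, e1⟩ := h
  have i0 := idx_interval hx0 j
  have i1 := idx_interval hx1 j
  have i0' := idx_interval hy0 j
  have i1' := idx_interval hy1 j
  rw [e0] at i0
  rw [e1] at i1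
  have b0 : (x 0 - y 0) ^ 2 ≤ s ^ 2 := sq_interval_aux hspos i0.1 i0.2 i0'.1 i0'.2
  have b1 : (x 1 - y 1) ^ 2 ≤ s ^ 2 := sq_interval_aux hspos i1.1 i1.2 i1'.1 i1'.2
  rw [dist_coords]
  have hb : (x 0 - y 0) ^ 2 + (x 1 - y 1) ^ 2 ≤ 2 * s ^ 2 := by linarith
  calc Real.sqrt ((x 0 - y 0) ^ 2 + (x 1 - y 1) ^ 2) ≤ Real.sqrt (2 * s ^ 2) :=
        Real.sqrt_le_sqrt hb
  _ = s * Real.sqrt 2 := by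
      rw [show 2 * s ^ 2 = s ^ 2 * 2 by ring, Real.sqrt_mul (by positivity),
        Real.sqrt_sq hspos.le]

lemma dist_proj_eq {x : Pt} (h : x 0 ≤ x 1) :
    dist x (proj x) = (x 1 - x 0) / 2 * Real.sqrt 2 := by
  rw [dist_coords]
  have h0 : proj x 0 = (x 0 + x 1) / 2 := by simp [proj]
  have h1 : proj x 1 = (x 0 + x 1) / 2 := by simp [proj]
  rw [h0, h1]
  have : (x 0 - (x 0 + x 1) / 2) ^ 2 + (x 1 - (x 0 + x 1) / 2) ^ 2
      = ((x 1 - x 0) / 2) ^ 2 * 2 := by ring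
  rw [this, Real.sqrt_mul (by positivity), Real.sqrt_sq (by linarith)]

lemma dist_proj_le_of_terminal {x : Pt} (hx0 : 0 ≤ x 0) (h : x 0 ≤ x 1) {j : ℕ}
    (ht : terminalAt x j) :
    dist x (proj x) ≤ (2 ^ j / 2) / 2 * Real.sqrt 2 := by
  rw [dist_proj_eq h]
  have hx1 : 0 ≤ x 1 := le_trans hx0 h
  have i0 := idx_interval hx0 j
  have i1 := idx_interval hx1 j
  rw [ht] at i0
  have : x 1 - x 0 ≤ 2 ^ j / 2 := by nlinarith [i0.1, i1.2]
  have h2 : (0:ℝ) ≤ Real.sqrt 2 := Real.sqrt_nonneg 2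
  apply mul_le_mul_of_nonneg_right _ h2
  linarith

lemma sqrt_two_gt_one : (1:ℝ) < Real.sqrt 2 := by
  have := Real.sq_sqrt (by norm_num : (0:ℝ) ≤ 2)
  nlinarith [Real.sqrt_nonneg 2]

lemma not_terminalAt_zero {x : Pt} (hx0 : 0 ≤ x 0) (hd : 1 ≤ (x 1 - x 0) / Real.sqrt 2) :
    ¬ terminalAt x 0 := by
  intro ht
  have hs2 : (1:ℝ) < Real.sqrt 2 := sqrt_two_gt_one
  have hgap : (1:ℝ) ≤ x 1 - x 0 := by
    rw [le_div_iff₀ (by positivity)] at hd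
    nlinarith
  have hx1 : 0 ≤ x 1 := by linarith
  have i0 := idx_interval hx0 0
  have i1 := idx_interval hx1 0
  rw [ht] at i0
  have e1 : ((idx (x 1) 0 : ℝ)) * (2 ^ 0 / 2) ≤ x 1 := i1.1
  have e0 : x 0 < ((idx (x 1) 0 : ℝ) + 1) * (2 ^ 0 / 2) := i0.2
  norm_num at e1 e0
  linarith
-- Part 4: cellCount and per-level lemmas
lemma cellCount_eq_idx {ι : Type*} [Fintype ι] (P : ι → Pt)
    (h0 : ∀ i, 0 ≤ P i 0) (h1 : ∀ i, 0 ≤ P i 1) (j a b : ℕ) :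
    cellCount P ((2:ℝ) ^ j / 2) a b
      = (Finset.univ.filter fun i => idx (P i 0) j = a ∧ idx (P i 1) j = b).card := by
  unfold cellCount
  congr 1
  apply Finset.filter_congr
  intro i _
  have e0 := mem_cell_iff (h0 i) j a
  have e1 := mem_cell_iff (h1 i) j b
  constructor
  · rintro ⟨u1, u2, u3, u4⟩; exact ⟨e0.mp ⟨u1, u2⟩, e1.mp ⟨u3, u4⟩⟩
  · rintro ⟨u1, u2⟩
    obtain ⟨v1, v2⟩ := e0.mpr u1
    obtain ⟨v3, v4⟩ := e1.mpr u2
    exact ⟨v1, v2, v3, v4⟩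

lemma cellCount_remove {m : ℕ} (P : Fin (m+1) → Pt) (i0 : Fin (m+1))
    (h0 : ∀ i, 0 ≤ P i 0) (h1 : ∀ i, 0 ≤ P i 1) (j a b : ℕ) :
    (cellCount P ((2:ℝ) ^ j / 2) a b : ℝ)
      = (cellCount (P ∘ i0.succAbove) ((2:ℝ) ^ j / 2) a b : ℝ)
        + (if idx (P i0 0) j = a ∧ idx (P i0 1) j = b then 1 else 0) := by
  rw [cellCount_eq_idx P h0 h1 j a b,
    cellCount_eq_idx (P ∘ i0.succAbove) (fun i => h0 _) (fun i => h1 _) j a b]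
  rw [Finset.card_filter, Finset.card_filter]
  push_cast
  rw [Fin.sum_univ_succAbove
    (fun i => if idx (P i 0) j = a ∧ idx (P i 1) j = b then (1:ℝ) else 0) i0]
  rw [add_comm]
  rfl

def Tlvl (L j : ℕ) {ι κ : Type*} [Fintype ι] [Fintype κ] (P : ι → Pt) (Q : κ → Pt) : ℝ :=
  ∑ a ∈ range (2 ^ (L + 1 - j)), ∑ b ∈ range (2 ^ (L + 1 - j)),
    if a = b then 0
    else |(cellCount P ((2:ℝ) ^ j / 2) a b : ℝ) - (cellCount Q ((2:ℝ) ^ j / 2) a b : ℝ)|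

lemma modL1_eq_Tlvl (L : ℕ) {ι κ : Type*} [Fintype ι] [Fintype κ] (P : ι → Pt) (Q : κ → Pt) :
    modL1 L P Q = ∑ j ∈ range (L + 2), ((2:ℝ) ^ j / 2) * Tlvl L j P Q := rfl

lemma Tlvl_nonneg (L j : ℕ) {ι κ : Type*} [Fintype ι] [Fintype κ] (P : ι → Pt) (Q : κ → Pt) :
    0 ≤ Tlvl L j P Q := by
  apply Finset.sum_nonneg; intro a _
  apply Finset.sum_nonneg; intro b _
  split
  · exact le_refl 0
  · exact abs_nonneg _

lemma Tlvl_comm (L j : ℕ) {ι κ : Type*} [Fintype ι] [Fintype κ] (P : ι → Pt) (Q : κ → Pt) :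
    Tlvl L j P Q = Tlvl L j Q P := by
  unfold Tlvl
  apply Finset.sum_congr rfl; intro a _
  apply Finset.sum_congr rfl; intro b _
  rw [abs_sub_comm]

lemma modL1_comm (L : ℕ) {ι κ : Type*} [Fintype ι] [Fintype κ] (P : ι → Pt) (Q : κ → Pt) :
    modL1 L P Q = modL1 L Q P := by
  rw [modL1_eq_Tlvl, modL1_eq_Tlvl]
  exact Finset.sum_congr rfl fun j _ => by rw [Tlvl_comm]

lemma modL1_nonneg (L : ℕ) {ι κ : Type*} [Fintype ι] [Fintype κ] (P : ι → Pt) (Q : κ → Pt) :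
    0 ≤ modL1 L P Q := by
  rw [modL1_eq_Tlvl]
  apply Finset.sum_nonneg; intro j _
  exact mul_nonneg (by positivity) (Tlvl_nonneg L j P Q)
-- Part 5: per-level comparison lemmas
lemma sum_add_two_le {α : Type*} [DecidableEq α] (s : Finset α) (f g : α → ℝ) (x y : α)
    (hx : x ∈ s) (hy : y ∈ s) (hxy : x ≠ y) (hall : ∀ a ∈ s, g a ≤ f a)
    (h1 : g x + 1 ≤ f x) (h2 : g y + 1 ≤ f y) :
    (∑ a ∈ s, g a) + 2 ≤ ∑ a ∈ s, f a := by
  have key : (2:ℝ) ≤ ∑ a ∈ s, (f a - g a) := by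
    have hsub : ({x, y} : Finset α) ⊆ s := by
      intro z hz
      rcases Finset.mem_insert.mp hz with rfl | hz
      · exact hx
      · rw [Finset.mem_singleton.mp hz]; exact hy
    have h2' : ∑ a ∈ ({x, y} : Finset α), (f a - g a) ≤ ∑ a ∈ s, (f a - g a) :=
      Finset.sum_le_sum_of_subset_of_nonneg hsub (fun a ha _ => by linarith [hall a ha])
    rw [Finset.sum_pair hxy] at h2'
    linarith
  rw [Finset.sum_sub_distrib] at key
  linarith

lemma sum_add_one_le {α : Type*} [DecidableEq α] (s : Finset α) (f g : α → ℝ) (x : α)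
    (hx : x ∈ s) (hall : ∀ a ∈ s, g a ≤ f a) (h1 : g x + 1 ≤ f x) :
    (∑ a ∈ s, g a) + 1 ≤ ∑ a ∈ s, f a := by
  have key : (1:ℝ) ≤ ∑ a ∈ s, (f a - g a) := by
    have hsub : ({x} : Finset α) ⊆ s := by simpa using hx
    have h2' : ∑ a ∈ ({x} : Finset α), (f a - g a) ≤ ∑ a ∈ s, (f a - g a) :=
      Finset.sum_le_sum_of_subset_of_nonneg hsub (fun a ha _ => by linarith [hall a ha])
    rw [Finset.sum_singleton] at h2'
    linarith
  rw [Finset.sum_sub_distrib] at key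
  linarith

lemma Tlvl_prod (L j : ℕ) {ι κ : Type*} [Fintype ι] [Fintype κ] (P : ι → Pt) (Q : κ → Pt) :
    Tlvl L j P Q = ∑ p ∈ range (2 ^ (L + 1 - j)) ×ˢ range (2 ^ (L + 1 - j)),
      (if p.1 = p.2 then 0
       else |(cellCount P ((2:ℝ) ^ j / 2) p.1 p.2 : ℝ)
          - (cellCount Q ((2:ℝ) ^ j / 2) p.1 p.2 : ℝ)|) := by
  unfold Tlvl
  rw [Finset.sum_product]

/-- Removing a P-point lying in a terminal cell does not change the level sum. -/
lemma TB_eq {m n : ℕ} (L j : ℕ) (P : Fin (m+1) → Pt) (Q : Fin n → Pt) (i0 : Fin (m+1))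
    (hP0 : ∀ i, 0 ≤ P i 0) (hP1 : ∀ i, 0 ≤ P i 1)
    (hterm : terminalAt (P i0) j) :
    Tlvl L j (P ∘ i0.succAbove) Q = Tlvl L j P Q := by
  unfold Tlvl
  apply Finset.sum_congr rfl; intro a _
  apply Finset.sum_congr rfl; intro b _
  by_cases hab : a = b
  · rw [if_pos hab, if_pos hab]
  · rw [if_neg hab, if_neg hab]
    have hrem := cellCount_remove P i0 hP0 hP1 j a b
    have hnot : ¬ (idx (P i0 0) j = a ∧ idx (P i0 1) j = b) := by
      rintro ⟨ha, hb⟩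
      exact hab (ha ▸ hb ▸ hterm)
    rw [if_neg hnot, add_zero] at hrem
    rw [hrem]

/-- Removing a P-point in a nonterminal cell containing no Q-points drops the level
sum by at least 1. -/
lemma TB_lt {m n : ℕ} (L j : ℕ) (P : Fin (m+1) → Pt) (Q : Fin n → Pt) (i0 : Fin (m+1))
    (hP0 : ∀ i, 0 ≤ P i 0) (hP1 : ∀ i, 0 ≤ P i 1)
    (hax : idx (P i0 0) j < 2 ^ (L + 1 - j)) (hbx : idx (P i0 1) j < 2 ^ (L + 1 - j))
    (hnt : idx (P i0 0) j ≠ idx (P i0 1) j)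
    (hQe : cellCount Q ((2:ℝ) ^ j / 2) (idx (P i0 0) j) (idx (P i0 1) j) = 0) :
    Tlvl L j (P ∘ i0.succAbove) Q + 1 ≤ Tlvl L j P Q := by
  rw [Tlvl_prod, Tlvl_prod]
  have hQe' : (cellCount Q ((2:ℝ) ^ j / 2) (idx (P i0 0) j) (idx (P i0 1) j) : ℝ) = 0 := by
    exact_mod_cast hQe
  apply sum_add_one_le _ _ _ (idx (P i0 0) j, idx (P i0 1) j)
  · rw [Finset.mem_product]
    exact ⟨Finset.mem_range.mpr hax, Finset.mem_range.mpr hbx⟩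
  · rintro ⟨a, b⟩ _
    by_cases hab : a = b
    · simp only [if_pos hab, le_refl]
    · simp only [if_neg hab]
      have hrem := cellCount_remove P i0 hP0 hP1 j a b
      by_cases hsp : idx (P i0 0) j = a ∧ idx (P i0 1) j = b
      · obtain ⟨rfl, rfl⟩ := hsp
        rw [if_pos ⟨rfl, rfl⟩] at hrem
        rw [hQe', hrem]
        have c1 : (0:ℝ) ≤ (cellCount (P ∘ i0.succAbove) ((2:ℝ) ^ j / 2)
            (idx (P i0 0) j) (idx (P i0 1) j) : ℝ) := Nat.cast_nonneg _
        rw [sub_zero, sub_zero, abs_of_nonneg c1, abs_of_nonneg (by linarith)]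
        linarith
      · rw [if_neg hsp, add_zero] at hrem
        rw [hrem]
  · simp only [if_neg hnt]
    have hrem := cellCount_remove P i0 hP0 hP1 j (idx (P i0 0) j) (idx (P i0 1) j)
    rw [if_pos ⟨rfl, rfl⟩] at hrem
    rw [hQe', hrem]
    have c1 : (0:ℝ) ≤ (cellCount (P ∘ i0.succAbove) ((2:ℝ) ^ j / 2)
        (idx (P i0 0) j) (idx (P i0 1) j) : ℝ) := Nat.cast_nonneg _
    rw [sub_zero, sub_zero, abs_of_nonneg c1, abs_of_nonneg (by linarith)]

/-- Removing a matched pair lying in the same cell does not change the level sum. -/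
lemma TA_eq {m n : ℕ} (L j : ℕ) (P : Fin (m+1) → Pt) (Q : Fin (n+1) → Pt)
    (i0 : Fin (m+1)) (j0 : Fin (n+1))
    (hP0 : ∀ i, 0 ≤ P i 0) (hP1 : ∀ i, 0 ≤ P i 1)
    (hQ0 : ∀ i, 0 ≤ Q i 0) (hQ1 : ∀ i, 0 ≤ Q i 1)
    (hsame : sameCell (P i0) (Q j0) j) :
    Tlvl L j (P ∘ i0.succAbove) (Q ∘ j0.succAbove) = Tlvl L j P Q := by
  unfold Tlvl
  apply Finset.sum_congr rfl; intro a _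
  apply Finset.sum_congr rfl; intro b _
  by_cases hab : a = b
  · rw [if_pos hab, if_pos hab]
  · rw [if_neg hab, if_neg hab]
    have hremP := cellCount_remove P i0 hP0 hP1 j a b
    have hremQ := cellCount_remove Q j0 hQ0 hQ1 j a b
    have hiff : (idx (P i0 0) j = a ∧ idx (P i0 1) j = b)
        ↔ (idx (Q j0 0) j = a ∧ idx (Q j0 1) j = b) := by
      rw [hsame.1, hsame.2]
    by_cases hc : idx (P i0 0) j = a ∧ idx (P i0 1) j = b
    · rw [if_pos hc] at hremP
      rw [if_pos (hiff.mp hc)] at hremQ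
      rw [hremP, hremQ]
      congr 1
      ring
    · rw [if_neg hc, add_zero] at hremP
      rw [if_neg (fun h => hc (hiff.mpr h)), add_zero] at hremQ
      rw [hremP, hremQ]

/-- Removing a matched pair lying in distinct nonterminal homogeneous cells drops the
level sum by at least 2. -/
lemma TA_lt {m n : ℕ} (L j : ℕ) (P : Fin (m+1) → Pt) (Q : Fin (n+1) → Pt)
    (i0 : Fin (m+1)) (j0 : Fin (n+1))
    (hP0 : ∀ i, 0 ≤ P i 0) (hP1 : ∀ i, 0 ≤ P i 1)
    (hQ0 : ∀ i, 0 ≤ Q i 0) (hQ1 : ∀ i, 0 ≤ Q i 1)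
    (hax : idx (P i0 0) j < 2 ^ (L + 1 - j)) (hbx : idx (P i0 1) j < 2 ^ (L + 1 - j))
    (hay : idx (Q j0 0) j < 2 ^ (L + 1 - j)) (hby : idx (Q j0 1) j < 2 ^ (L + 1 - j))
    (hntP : idx (P i0 0) j ≠ idx (P i0 1) j)
    (hntQ : idx (Q j0 0) j ≠ idx (Q j0 1) j)
    (hdist : ¬ sameCell (P i0) (Q j0) j)
    (hceQ : cellCount Q ((2:ℝ) ^ j / 2) (idx (P i0 0) j) (idx (P i0 1) j) = 0)
    (hceP : cellCount P ((2:ℝ) ^ j / 2) (idx (Q j0 0) j) (idx (Q j0 1) j) = 0) :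
    Tlvl L j (P ∘ i0.succAbove) (Q ∘ j0.succAbove) + 2 ≤ Tlvl L j P Q := by
  rw [Tlvl_prod, Tlvl_prod]
  have hceQ' : (cellCount Q ((2:ℝ) ^ j / 2) (idx (P i0 0) j) (idx (P i0 1) j) : ℝ) = 0 := by
    exact_mod_cast hceQ
  have hceP' : (cellCount P ((2:ℝ) ^ j / 2) (idx (Q j0 0) j) (idx (Q j0 1) j) : ℝ) = 0 := by
    exact_mod_cast hceP
  have hne : (idx (P i0 0) j, idx (P i0 1) j) ≠ (idx (Q j0 0) j, idx (Q j0 1) j) :=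
    fun h => hdist ⟨congrArg Prod.fst h, congrArg Prod.snd h⟩
  -- the removed Q point is not in the P-cell, and vice versa
  have hQQ' : (cellCount (Q ∘ j0.succAbove) ((2:ℝ) ^ j / 2)
        (idx (P i0 0) j) (idx (P i0 1) j) : ℝ) = 0
      ∧ ¬ (idx (Q j0 0) j = idx (P i0 0) j ∧ idx (Q j0 1) j = idx (P i0 1) j) := by
    have hrem := cellCount_remove Q j0 hQ0 hQ1 j (idx (P i0 0) j) (idx (P i0 1) j)
    rw [hceQ'] at hrem
    have c1 : (0:ℝ) ≤ (cellCount (Q ∘ j0.succAbove) ((2:ℝ) ^ j / 2)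
        (idx (P i0 0) j) (idx (P i0 1) j) : ℝ) := Nat.cast_nonneg _
    by_cases hc : idx (Q j0 0) j = idx (P i0 0) j ∧ idx (Q j0 1) j = idx (P i0 1) j
    · rw [if_pos hc] at hrem; exfalso; linarith
    · rw [if_neg hc, add_zero] at hrem; exact ⟨hrem.symm, hc⟩
  have hPP' : (cellCount (P ∘ i0.succAbove) ((2:ℝ) ^ j / 2)
        (idx (Q j0 0) j) (idx (Q j0 1) j) : ℝ) = 0
      ∧ ¬ (idx (P i0 0) j = idx (Q j0 0) j ∧ idx (P i0 1) j = idx (Q j0 1) j) := by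
    have hrem := cellCount_remove P i0 hP0 hP1 j (idx (Q j0 0) j) (idx (Q j0 1) j)
    rw [hceP'] at hrem
    have c1 : (0:ℝ) ≤ (cellCount (P ∘ i0.succAbove) ((2:ℝ) ^ j / 2)
        (idx (Q j0 0) j) (idx (Q j0 1) j) : ℝ) := Nat.cast_nonneg _
    by_cases hc : idx (P i0 0) j = idx (Q j0 0) j ∧ idx (P i0 1) j = idx (Q j0 1) j
    · rw [if_pos hc] at hrem; exfalso; linarith
    · rw [if_neg hc, add_zero] at hrem; exact ⟨hrem.symm, hc⟩
  apply sum_add_two_le _ _ _ (idx (P i0 0) j, idx (P i0 1) j)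
    (idx (Q j0 0) j, idx (Q j0 1) j) ?_ ?_ hne
  · -- pointwise inequality
    rintro ⟨a, b⟩ _
    by_cases hab : a = b
    · simp only [if_pos hab, le_refl]
    · simp only [if_neg hab]
      have hremP := cellCount_remove P i0 hP0 hP1 j a b
      have hremQ := cellCount_remove Q j0 hQ0 hQ1 j a b
      by_cases hcP : idx (P i0 0) j = a ∧ idx (P i0 1) j = b
      · obtain ⟨rfl, rfl⟩ := hcP
        rw [if_pos ⟨rfl, rfl⟩] at hremP
        rw [if_neg hQQ'.2, add_zero] at hremQ
        rw [hremP, ← hremQ, hceQ']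
        have c1 : (0:ℝ) ≤ (cellCount (P ∘ i0.succAbove) ((2:ℝ) ^ j / 2)
            (idx (P i0 0) j) (idx (P i0 1) j) : ℝ) := Nat.cast_nonneg _
        rw [sub_zero, sub_zero, abs_of_nonneg c1, abs_of_nonneg (by linarith)]
        linarith
      · by_cases hcQ : idx (Q j0 0) j = a ∧ idx (Q j0 1) j = b
        · obtain ⟨rfl, rfl⟩ := hcQ
          rw [if_pos ⟨rfl, rfl⟩] at hremQ
          rw [if_neg hPP'.2, add_zero] at hremP
          rw [hremQ, ← hremP, hceP']
          have c1 : (0:ℝ) ≤ (cellCount (Q ∘ j0.succAbove) ((2:ℝ) ^ j / 2)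
              (idx (Q j0 0) j) (idx (Q j0 1) j) : ℝ) := Nat.cast_nonneg _
          rw [zero_sub, zero_sub, abs_neg, abs_neg, abs_of_nonneg c1,
            abs_of_nonneg (by linarith)]
          linarith
        · rw [if_neg hcP, add_zero] at hremP
          rw [if_neg hcQ, add_zero] at hremQ
          rw [hremP, hremQ]
  · -- at the P-cell: drop by 1
    simp only [if_neg hntP]
    have hremP := cellCount_remove P i0 hP0 hP1 j (idx (P i0 0) j) (idx (P i0 1) j)
    rw [if_pos ⟨rfl, rfl⟩] at hremP
    have hremQ := cellCount_remove Q j0 hQ0 hQ1 j (idx (P i0 0) j) (idx (P i0 1) j)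
    rw [if_neg hQQ'.2, add_zero] at hremQ
    rw [hremP, ← hremQ, hceQ']
    have c1 : (0:ℝ) ≤ (cellCount (P ∘ i0.succAbove) ((2:ℝ) ^ j / 2)
        (idx (P i0 0) j) (idx (P i0 1) j) : ℝ) := Nat.cast_nonneg _
    rw [sub_zero, sub_zero, abs_of_nonneg c1, abs_of_nonneg (by linarith)]
  · -- at the Q-cell: drop by 1
    simp only [if_neg hntQ]
    have hremQ := cellCount_remove Q j0 hQ0 hQ1 j (idx (Q j0 0) j) (idx (Q j0 1) j)
    rw [if_pos ⟨rfl, rfl⟩] at hremQ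
    have hremP := cellCount_remove P i0 hP0 hP1 j (idx (Q j0 0) j) (idx (Q j0 1) j)
    rw [if_neg hPP'.2, add_zero] at hremP
    rw [hremQ, ← hremP, hceP']
    have c1 : (0:ℝ) ≤ (cellCount (Q ∘ j0.succAbove) ((2:ℝ) ^ j / 2)
        (idx (Q j0 0) j) (idx (Q j0 1) j) : ℝ) := Nat.cast_nonneg _
    rw [zero_sub, zero_sub, abs_neg, abs_neg, abs_of_nonneg c1, abs_of_nonneg (by linarith)]
  · rw [Finset.mem_product]
    exact ⟨Finset.mem_range.mpr hax, Finset.mem_range.mpr hbx⟩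
  · rw [Finset.mem_product]
    exact ⟨Finset.mem_range.mpr hay, Finset.mem_range.mpr hby⟩

/-- Assembly: per-level inequalities combine into the modified L1 bound. -/
lemma modL1_assemble {ι κ ι' κ' : Type*} [Fintype ι] [Fintype κ] [Fintype ι'] [Fintype κ']
    (L : ℕ) (P : ι → Pt) (Q : κ → Pt) (P' : ι' → Pt) (Q' : κ' → Pt)
    (jstar : ℕ) (hjstar : jstar ≤ L + 1) (c : ℝ) (hc : 0 ≤ c)
    (heq : ∀ j, jstar ≤ j → j < L + 2 → Tlvl L j P' Q' = Tlvl L j P Q)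
    (hlt : ∀ j < jstar, Tlvl L j P' Q' + c ≤ Tlvl L j P Q) :
    modL1 L P' Q' + c * ((2:ℝ) ^ jstar - 1) / 2 ≤ modL1 L P Q := by
  rw [modL1_eq_Tlvl, modL1_eq_Tlvl]
  have key : ∀ j ∈ range (L + 2),
      ((2:ℝ) ^ j / 2) * Tlvl L j P' Q' + (if j < jstar then c * (2:ℝ) ^ j / 2 else 0)
        ≤ ((2:ℝ) ^ j / 2) * Tlvl L j P Q := by
    intro j hj
    rw [Finset.mem_range] at hj
    by_cases h : j < jstar
    · rw [if_pos h]
      have h1 := hlt j h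
      have hs : (0:ℝ) < 2 ^ j / 2 := side_pos j
      nlinarith [h1, hs]
    · rw [if_neg h, add_zero, heq j (not_lt.mp h) hj]
  have hsum := Finset.sum_le_sum key
  rw [Finset.sum_add_distrib] at hsum
  have hgeom : ∑ j ∈ range (L + 2), (if j < jstar then c * (2:ℝ) ^ j / 2 else 0)
      = c * ((2:ℝ) ^ jstar - 1) / 2 := by
    rw [← Finset.sum_subset (Finset.range_subset_range.mpr (by omega : jstar ≤ L + 2))
      (fun x _ hx => if_neg (by simpa using hx))]
    rw [Finset.sum_congr rfl (fun x hx => if_pos (Finset.mem_range.mp hx))]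
    have : ∀ x ∈ range jstar, c * (2:ℝ) ^ x / 2 = c / 2 * (2:ℝ) ^ x := by
      intro x _; ring
    rw [Finset.sum_congr rfl this, ← Finset.mul_sum, geom_sum_eq (by norm_num) jstar]
    ring
  rw [hgeom] at hsum
  exact hsum
-- Part 6: main theorem
theorem main_aux (N : ℕ) : ∀ (L m n : ℕ) (P : Fin m → Pt) (Q : Fin n → Pt),
    m + n ≤ N →
    (∀ u : Fin m ⊕ Fin n, ∀ k, Sum.elim P Q u k ∈ Set.Ico (0 : ℝ) (2 ^ L)) →
    (∀ u : Fin m ⊕ Fin n, Sum.elim P Q u 0 < Sum.elim P Q u 1) →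
    (∀ u v : Fin m ⊕ Fin n, Sum.elim P Q u ≠ Sum.elim P Q v →
      1 ≤ dist (Sum.elim P Q u) (Sum.elim P Q v)) →
    (∀ u : Fin m ⊕ Fin n, 1 ≤ (Sum.elim P Q u 1 - Sum.elim P Q u 0) / Real.sqrt 2) →
    dW P Q ≤ 2 * Real.sqrt 2 * modL1 L P Q := by
  induction N with
  | zero =>
    intro L m n P Q hmn hrange habove hsep hdiag
    have hm : m = 0 := by omega
    have hn : n = 0 := by omega
    subst hm; subst hn
    have h0 := dW_empty P Q
    have h1 : 0 ≤ 2 * Real.sqrt 2 * modL1 L P Q :=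
      mul_nonneg (by positivity) (modL1_nonneg L P Q)
    linarith
  | succ N ih =>
    intro L m n P Q hmn hrange habove hsep hdiag
    by_cases hzero : m = 0 ∧ n = 0
    · obtain ⟨hm, hn⟩ := hzero
      subst hm; subst hn
      have h0 := dW_empty P Q
      have h1 : 0 ≤ 2 * Real.sqrt 2 * modL1 L P Q :=
        mul_nonneg (by positivity) (modL1_nonneg L P Q)
      linarith
    -- basic coordinate facts
    have hP0 : ∀ i, 0 ≤ P i 0 := fun i => (hrange (Sum.inl i) 0).1
    have hP1 : ∀ i, 0 ≤ P i 1 := fun i => (hrange (Sum.inl i) 1).1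
    have hQ0 : ∀ i, 0 ≤ Q i 0 := fun i => (hrange (Sum.inr i) 0).1
    have hQ1 : ∀ i, 0 ≤ Q i 1 := fun i => (hrange (Sum.inr i) 1).1
    have hP0' : ∀ i, P i 0 < 2 ^ L := fun i => (hrange (Sum.inl i) 0).2
    have hP1' : ∀ i, P i 1 < 2 ^ L := fun i => (hrange (Sum.inl i) 1).2
    have hQ0' : ∀ i, Q i 0 < 2 ^ L := fun i => (hrange (Sum.inr i) 0).2
    have hQ1' : ∀ i, Q i 1 < 2 ^ L := fun i => (hrange (Sum.inr i) 1).2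
    -- the matching level
    set Match : ℕ → Prop := fun j =>
      (∃ (i : Fin m) (j' : Fin n), sameCell (P i) (Q j') j) ∨
      (∃ i : Fin m, terminalAt (P i) j) ∨ (∃ j' : Fin n, terminalAt (Q j') j) with hMatch
    letI : DecidablePred Match := fun _ => Classical.dec _
    have hML1 : Match (L + 1) := by
      rcases Nat.eq_zero_or_pos m with hm | hm
      · have hn : 0 < n := by
          rcases Nat.eq_zero_or_pos n with hn | hn
          · exact absurd ⟨hm, hn⟩ hzero
          · exact hn
        exact Or.inr (Or.inr ⟨⟨0, hn⟩,
          terminalAt_top L (hQ0 _) (hQ1 _) (hQ0' _) (hQ1' _)⟩)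
      · exact Or.inr (Or.inl ⟨⟨0, hm⟩,
          terminalAt_top L (hP0 _) (hP1 _) (hP0' _) (hP1' _)⟩)
    have hex : ∃ j, Match j := ⟨L + 1, hML1⟩
    set jstar := Nat.find hex with hjdef
    have hjM : Match jstar := Nat.find_spec hex
    have hmin : ∀ j < jstar, ¬ Match j := fun j hj => Nat.find_min hex hj
    have hjle : jstar ≤ L + 1 := Nat.find_le hML1
    have hnotermP : ∀ j < jstar, ∀ i, ¬ terminalAt (P i) j :=
      fun j hj i ht => hmin j hj (Or.inr (Or.inl ⟨i, ht⟩))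
    have hnotermQ : ∀ j < jstar, ∀ i, ¬ terminalAt (Q i) j :=
      fun j hj i ht => hmin j hj (Or.inr (Or.inr ⟨i, ht⟩))
    have hnosame : ∀ j < jstar, ∀ i j', ¬ sameCell (P i) (Q j') j :=
      fun j hj i j' hs => hmin j hj (Or.inl ⟨i, j', hs⟩)
    have hPcellQ : ∀ j < jstar, ∀ i : Fin m,
        cellCount Q ((2:ℝ) ^ j / 2) (idx (P i 0) j) (idx (P i 1) j) = 0 := by
      intro j hj i
      rw [cellCount_eq_idx Q hQ0 hQ1, Finset.card_eq_zero, Finset.filter_eq_empty_iff]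
      rintro j' _ ⟨h1, h2⟩
      exact hnosame j hj i j' ⟨h1.symm, h2.symm⟩
    have hQcellP : ∀ j < jstar, ∀ j' : Fin n,
        cellCount P ((2:ℝ) ^ j / 2) (idx (Q j' 0) j) (idx (Q j' 1) j) = 0 := by
      intro j hj j'
      rw [cellCount_eq_idx P hP0 hP1, Finset.card_eq_zero, Finset.filter_eq_empty_iff]
      rintro i _ ⟨h1, h2⟩
      exact hnosame j hj i j' ⟨h1, h2⟩
    have hsqrt2 : (0:ℝ) < Real.sqrt 2 := by positivity
    have hs2 : Real.sqrt 2 * Real.sqrt 2 = 2 := Real.mul_self_sqrt (by norm_num)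
    rcases hjM with ⟨i, j', hsame⟩ | ⟨i, hterm⟩ | ⟨j', hterm⟩
    · -- CASE A : a P-point and a Q-point share the cell at level jstar
      obtain ⟨m', rfl⟩ : ∃ m', m = m' + 1 := ⟨m - 1, by have := i.pos; omega⟩
      obtain ⟨n', rfl⟩ : ∃ n', n = n' + 1 := ⟨n - 1, by have := j'.pos; omega⟩
      set P' := P ∘ i.succAbove with hP'
      set Q' := Q ∘ j'.succAbove with hQ'
      have helim : ∀ u : Fin m' ⊕ Fin n',
          Sum.elim P' Q' u = Sum.elim P Q (Sum.map i.succAbove j'.succAbove u) := by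
        rintro (a | b) <;> rfl
      have hIH := ih L m' n' P' Q' (by omega)
        (fun u k => by rw [helim u]; exact hrange _ k)
        (fun u => by rw [helim u]; exact habove _)
        (fun u v h => by
          rw [helim u, helim v] at h ⊢
          exact hsep _ _ h)
        (fun u => by rw [helim u]; exact hdiag _)
      have hext := dW_extend_pair P Q i j'
      have hassem : modL1 L P' Q' + 2 * ((2:ℝ) ^ jstar - 1) / 2 ≤ modL1 L P Q := by
        apply modL1_assemble L P Q P' Q' jstar hjle 2 (by norm_num)
        · intro j hj1 _
          exact TA_eq L j P Q i j' hP0 hP1 hQ0 hQ1 (sameCell_mono hj1 hsame)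
        · intro j hj
          have hjL : j ≤ L + 1 := by omega
          exact TA_lt L j P Q i j' hP0 hP1 hQ0 hQ1
            (idx_lt (hP0 i) (hP0' i) hjL) (idx_lt (hP1 i) (hP1' i) hjL)
            (idx_lt (hQ0 j') (hQ0' j') hjL) (idx_lt (hQ1 j') (hQ1' j') hjL)
            (fun h => hnotermP j hj i h) (fun h => hnotermQ j hj j' h)
            (hnosame j hj i j') (hPcellQ j hj i) (hQcellP j hj j')
      by_cases hj0 : jstar = 0
      · -- the two points coincide
        have hle := dist_le_of_sameCell (hP0 i) (hP1 i) (hQ0 j') (hQ1 j') (hj0 ▸ hsame)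
        have hd0 : dist (P i) (Q j') = 0 := by
          by_cases heqpt : P i = Q j'
          · rw [heqpt, dist_self]
          · exfalso
            have h1 := hsep (Sum.inl i) (Sum.inr j') heqpt
            simp only [Sum.elim_inl, Sum.elim_inr] at h1
            norm_num at hle
            nlinarith [hs2, hsqrt2]
        rw [hd0, zero_add] at hext
        have hmono : modL1 L P' Q' ≤ modL1 L P Q := by
          rw [hj0] at hassem; norm_num at hassem; linarith
        calc dW P Q ≤ dW P' Q' := hext
        _ ≤ 2 * Real.sqrt 2 * modL1 L P' Q' := hIH
        _ ≤ 2 * Real.sqrt 2 * modL1 L P Q := by nlinarith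
      · have hj1 : 1 ≤ jstar := Nat.one_le_iff_ne_zero.mpr hj0
        have h2j : (2:ℝ) ≤ 2 ^ jstar := by
          calc (2:ℝ) = 2 ^ 1 := (pow_one 2).symm
          _ ≤ 2 ^ jstar := pow_le_pow_right₀ (by norm_num) hj1
        have hle := dist_le_of_sameCell (hP0 i) (hP1 i) (hQ0 j') (hQ1 j') hsame
        calc dW P Q ≤ dist (P i) (Q j') + dW P' Q' := hext
        _ ≤ (2 ^ jstar / 2) * Real.sqrt 2 + 2 * Real.sqrt 2 * modL1 L P' Q' := by
            have := hIH; linarith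
        _ ≤ 2 * Real.sqrt 2 * modL1 L P Q := by nlinarith
    · -- CASE B : a P-point is in a terminal cell at level jstar
      obtain ⟨m', rfl⟩ : ∃ m', m = m' + 1 := ⟨m - 1, by have := i.pos; omega⟩
      set P' := P ∘ i.succAbove with hP'
      have helim : ∀ u : Fin m' ⊕ Fin n,
          Sum.elim P' Q u = Sum.elim P Q (Sum.map i.succAbove id u) := by
        rintro (a | b) <;> rfl
      have hIH := ih L m' n P' Q (by omega)
        (fun u k => by rw [helim u]; exact hrange _ k)
        (fun u => by rw [helim u]; exact habove _)
        (fun u v h => by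
          rw [helim u, helim v] at h ⊢
          exact hsep _ _ h)
        (fun u => by rw [helim u]; exact hdiag _)
      have hext := dW_extend_diagP P Q i
      have hj0 : jstar ≠ 0 := by
        intro h
        exact not_terminalAt_zero (hP0 i) (by simpa using hdiag (Sum.inl i)) (h ▸ hterm)
      have hj1 : 1 ≤ jstar := Nat.one_le_iff_ne_zero.mpr hj0
      have h2j : (2:ℝ) ≤ 2 ^ jstar := by
        calc (2:ℝ) = 2 ^ 1 := (pow_one 2).symm
        _ ≤ 2 ^ jstar := pow_le_pow_right₀ (by norm_num) hj1
      have hcost := dist_proj_le_of_terminal (hP0 i)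
        (le_of_lt (by simpa using habove (Sum.inl i))) hterm
      have hassem : modL1 L P' Q + 1 * ((2:ℝ) ^ jstar - 1) / 2 ≤ modL1 L P Q := by
        apply modL1_assemble L P Q P' Q jstar hjle 1 (by norm_num)
        · intro j hj1' _
          exact TB_eq L j P Q i hP0 hP1 (terminalAt_mono hj1' hterm)
        · intro j hj
          have hjL : j ≤ L + 1 := by omega
          exact TB_lt L j P Q i hP0 hP1
            (idx_lt (hP0 i) (hP0' i) hjL) (idx_lt (hP1 i) (hP1' i) hjL)
            (fun h => hnotermP j hj i h) (hPcellQ j hj i)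
      calc dW P Q ≤ dist (P i) (proj (P i)) + dW P' Q := hext
      _ ≤ (2 ^ jstar / 2) / 2 * Real.sqrt 2 + 2 * Real.sqrt 2 * modL1 L P' Q := by
          have := hIH; linarith
      _ ≤ 2 * Real.sqrt 2 * modL1 L P Q := by nlinarith
    · -- CASE C : a Q-point is in a terminal cell at level jstar
      obtain ⟨n', rfl⟩ : ∃ n', n = n' + 1 := ⟨n - 1, by have := j'.pos; omega⟩
      set Q' := Q ∘ j'.succAbove with hQ'
      have helim : ∀ u : Fin m ⊕ Fin n',
          Sum.elim P Q' u = Sum.elim P Q (Sum.map id j'.succAbove u) := by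
        rintro (a | b) <;> rfl
      have hIH := ih L m n' P Q' (by omega)
        (fun u k => by rw [helim u]; exact hrange _ k)
        (fun u => by rw [helim u]; exact habove _)
        (fun u v h => by
          rw [helim u, helim v] at h ⊢
          exact hsep _ _ h)
        (fun u => by rw [helim u]; exact hdiag _)
      have hext := dW_extend_diagQ P Q j'
      have hj0 : jstar ≠ 0 := by
        intro h
        exact not_terminalAt_zero (hQ0 j') (by simpa using hdiag (Sum.inr j')) (h ▸ hterm)
      have hj1 : 1 ≤ jstar := Nat.one_le_iff_ne_zero.mpr hj0
      have h2j : (2:ℝ) ≤ 2 ^ jstar := by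
        calc (2:ℝ) = 2 ^ 1 := (pow_one 2).symm
        _ ≤ 2 ^ jstar := pow_le_pow_right₀ (by norm_num) hj1
      have hcost := dist_proj_le_of_terminal (hQ0 j')
        (le_of_lt (by simpa using habove (Sum.inr j'))) hterm
      have hassem : modL1 L P Q' + 1 * ((2:ℝ) ^ jstar - 1) / 2 ≤ modL1 L P Q := by
        apply modL1_assemble L P Q P Q' jstar hjle 1 (by norm_num)
        · intro j hj1' _
          rw [Tlvl_comm L j P Q', Tlvl_comm L j P Q]
          exact TB_eq L j Q P j' hQ0 hQ1 (terminalAt_mono hj1' hterm)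
        · intro j hj
          have hjL : j ≤ L + 1 := by omega
          rw [Tlvl_comm L j P Q', Tlvl_comm L j P Q]
          exact TB_lt L j Q P j' hQ0 hQ1
            (idx_lt (hQ0 j') (hQ0' j') hjL) (idx_lt (hQ1 j') (hQ1' j') hjL)
            (fun h => hnotermQ j hj j' h) (hQcellP j hj j')
      calc dW P Q ≤ dist (Q j') (proj (Q j')) + dW P Q' := hext
      _ ≤ (2 ^ jstar / 2) / 2 * Real.sqrt 2 + 2 * Real.sqrt 2 * modL1 L P Q' := by
          have := hIH; linarith
      _ ≤ 2 * Real.sqrt 2 * modL1 L P Q := by nlinarith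


/-- Lemma 3 (lower bound): for persistence diagrams `P`, `Q` above the diagonal in
`[0, 2^L)²`, with pairwise distances `≥ 1` between distinct points and distance `≥ 1`
to the diagonal, the 1-Wasserstein distance satisfies
`d_W(P, Q) ≤ 2√2 · |V^P - V^Q|_T`. -/
theorem dW_le_modL1 (L m n : ℕ) (P : Fin m → Pt) (Q : Fin n → Pt)
    (hrange : ∀ u : Fin m ⊕ Fin n, ∀ k, Sum.elim P Q u k ∈ Set.Ico (0 : ℝ) (2 ^ L))
    (habove : ∀ u : Fin m ⊕ Fin n, Sum.elim P Q u 0 < Sum.elim P Q u 1)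
    (hsep : ∀ u v : Fin m ⊕ Fin n, Sum.elim P Q u ≠ Sum.elim P Q v →
      1 ≤ dist (Sum.elim P Q u) (Sum.elim P Q v))
    (hdiag : ∀ u : Fin m ⊕ Fin n,
      1 ≤ (Sum.elim P Q u 1 - Sum.elim P Q u 0) / Real.sqrt 2) :
    dW P Q ≤ 2 * Real.sqrt 2 * modL1 L P Q := by
  exact main_aux (m + n) L m n P Q le_rfl hrange habove hsep hdiag
end
end

section
/- Let P, Q be persistence diagrams each contained in a square of side Δ, with all points at distance at least 1 pairwise and at least 1 from the diagonal. Under a uniformly random shift of the quadtree, the expected modified L₁ distance satisfies E[|V^P − V^Q|_T] ≤ C·log Δ·d_W(P,Q) for a universal constant C, where the shift is uniform in [0,Δ]² and the expectation is over the shift. -/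
noncomputable section
open Finset Classical MeasureTheory

/-- Number of points of `P` in the cell with index `(a, b)` of the grid of side `s`
shifted by `t` (a point `x` is in cell `(a,b)` iff `⌊(x₀+t₁)/s⌋ = a` and `⌊(x₁+t₂)/s⌋ = b`). -/
def sCellCount {ι : Type*} [Fintype ι] (P : ι → Pt) (t : ℝ × ℝ) (s : ℝ) (a b : ℤ) : ℕ :=
  (Finset.univ.filter fun i =>
    ⌊(P i 0 + t.1) / s⌋ = a ∧ ⌊(P i 1 + t.2) / s⌋ = b).card

/-- The shifted cell `(a, b)` of side `s` is terminal: it intersects the diagonal `y = x`. -/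
def sTerminal (t : ℝ × ℝ) (s : ℝ) (a b : ℤ) : Prop :=
  ∃ r : ℝ, ⌊(r + t.1) / s⌋ = a ∧ ⌊(r + t.2) / s⌋ = b

/-- The modified `L₁` distance `|V^P - V^Q|_T` for the quadtree with grids of side
lengths `1/2, 1, …, 2^L` shifted by `t`: terminal (diagonal-intersecting) cell
coordinates are zeroed out. -/
def sModL1 (L : ℕ) {ι κ : Type*} [Fintype ι] [Fintype κ] (P : ι → Pt) (Q : κ → Pt)
    (t : ℝ × ℝ) : ℝ :=
  ∑ j ∈ range (L + 2), ((2 : ℝ) ^ j / 2) *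
    ∑ a ∈ Finset.Icc (0 : ℤ) (2 ^ (L + 2)), ∑ b ∈ Finset.Icc (0 : ℤ) (2 ^ (L + 2)),
      if sTerminal t ((2 : ℝ) ^ j / 2) a b then 0
      else |(sCellCount P t ((2 : ℝ) ^ j / 2) a b : ℝ) -
            (sCellCount Q t ((2 : ℝ) ^ j / 2) a b : ℝ)|

/- ====== auxiliary lemmas ====== -/

/-- indicator that `u` and `v` are separated by the grid of side `s` shifted by `t`. -/
def chi (s u v t : ℝ) : ℝ := if ⌊(u+t)/s⌋ = ⌊(v+t)/s⌋ then 0 else 1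

lemma chi_nonneg (s u v t : ℝ) : 0 ≤ chi s u v t := by unfold chi; split <;> norm_num

lemma chi_le_one (s u v t : ℝ) : chi s u v t ≤ 1 := by unfold chi; split <;> norm_num

lemma chi_comm (s u v t : ℝ) : chi s u v t = chi s v u t := by unfold chi; simp [eq_comm]

lemma measurable_chi (s u v : ℝ) : Measurable (chi s u v) := by
  unfold chi
  exact Measurable.ite
    (measurableSet_eq_fun ((measurable_id.const_add u).div_const s).floor
      ((measurable_id.const_add v).div_const s).floor) measurable_const measurable_const

lemma integrableOn_of_bdd {α : Type*} [MeasurableSpace α] {μ : MeasureTheory.Measure α}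
    {S : Set α} (hS : μ S ≠ ⊤) {f : α → ℝ} (hm : Measurable f) (h0 : ∀ x, 0 ≤ f x)
    (h1 : ∀ x, f x ≤ 1) : IntegrableOn f S μ := by
  refine Integrable.mono' (g := fun _ => (1:ℝ)) (integrableOn_const hS)
    hm.aestronglyMeasurable.restrict (Filter.Eventually.of_forall fun t => ?_)
  rw [Real.norm_eq_abs, abs_of_nonneg (h0 t)]; exact h1 t

lemma integrableOn_chi1 {S : Set (ℝ×ℝ)} (hS : volume S ≠ ⊤) (s u v : ℝ) :
    IntegrableOn (fun t : ℝ×ℝ => chi s u v t.1) S :=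
  integrableOn_of_bdd hS ((measurable_chi s u v).comp measurable_fst)
    (fun _ => chi_nonneg _ _ _ _) (fun _ => chi_le_one _ _ _ _)

lemma integrableOn_chi2 {S : Set (ℝ×ℝ)} (hS : volume S ≠ ⊤) (s u v : ℝ) :
    IntegrableOn (fun t : ℝ×ℝ => chi s u v t.2) S :=
  integrableOn_of_bdd hS ((measurable_chi s u v).comp measurable_snd)
    (fun _ => chi_nonneg _ _ _ _) (fun _ => chi_le_one _ _ _ _)

lemma oneDim {s T u v : ℝ} (hs : 0 < s) (hu : 0 ≤ u) (huv : u ≤ v) (hv : v ≤ T) :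
    ∫ t in Set.Icc (0:ℝ) T, chi s u v t ≤ 2*T/s*(v-u) := by
  set K : ℤ := ⌊2*T/s⌋ with hK
  set g : ℝ → ℝ := fun t =>
    ∑ k ∈ Finset.Icc (1:ℤ) K, Set.indicator (Set.Ico ((k:ℝ)*s - v) ((k:ℝ)*s - u)) 1 t with hg
  have hT : (0:ℝ) ≤ T := le_trans (le_trans hu huv) hv
  have hind0 : ∀ (a b : ℝ) (t : ℝ), (0:ℝ) ≤ Set.indicator (Set.Ico a b) 1 t := fun a b t =>
    Set.indicator_nonneg (fun _ _ => zero_le_one) t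
  have hind1 : ∀ (a b : ℝ) (t : ℝ), Set.indicator (Set.Ico a b) (1 : ℝ → ℝ) t ≤ 1 := by
    intro a b t; by_cases h : t ∈ Set.Ico a b <;> simp [h]
  have hgint : IntegrableOn g (Set.Icc (0:ℝ) T) := by
    apply MeasureTheory.integrable_finset_sum
    intro k _
    exact integrableOn_of_bdd (by simp [Real.volume_Icc])
      (measurable_one.indicator measurableSet_Ico) (hind0 _ _) (hind1 _ _)
  have hpt : ∀ t ∈ Set.Icc (0:ℝ) T, chi s u v t ≤ g t := by
    intro t ht
    unfold chi
    split
    · exact Finset.sum_nonneg fun k _ => hind0 _ _ _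
    · rename_i hne
      set k : ℤ := ⌊(v+t)/s⌋ with hk
      have hle : ⌊(u+t)/s⌋ ≤ k := Int.floor_le_floor (by gcongr)
      have hlt : ⌊(u+t)/s⌋ < k := lt_of_le_of_ne hle hne
      have h1 : (k:ℝ)*s ≤ v + t := (le_div_iff₀ hs).mp (Int.floor_le ((v+t)/s))
      have h2 : u + t < (k:ℝ)*s := by
        have hlt' : ((⌊(u+t)/s⌋:ℝ) + 1) ≤ (k:ℝ) := by exact_mod_cast hlt
        have := Int.lt_floor_add_one ((u+t)/s)
        rw [← div_lt_iff₀ hs]; linarith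
      have hk1 : 1 ≤ k := by
        have h3 : (0:ℝ) < (k:ℝ)*s := lt_of_le_of_lt (by linarith [ht.1] : (0:ℝ) ≤ u + t) h2
        have h4 : (0:ℝ) < (k:ℝ) := by nlinarith
        have : (0:ℤ) < k := by exact_mod_cast h4
        omega
      have hkK : k ≤ K := by
        apply Int.le_floor.mpr
        rw [le_div_iff₀ hs]
        have := ht.2
        linarith
      have hmem : t ∈ Set.Ico ((k:ℝ)*s - v) ((k:ℝ)*s - u) := ⟨by linarith, by linarith⟩
      calc (1:ℝ) = Set.indicator (Set.Ico ((k:ℝ)*s - v) ((k:ℝ)*s - u)) 1 t := by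
              rw [Set.indicator_of_mem hmem]; rfl
        _ ≤ g t := Finset.single_le_sum (f := fun k : ℤ =>
              Set.indicator (Set.Ico ((k:ℝ)*s - v) ((k:ℝ)*s - u)) 1 t)
              (fun k _ => hind0 _ _ _) (Finset.mem_Icc.mpr ⟨hk1, hkK⟩)
  have hint : ∫ t in Set.Icc (0:ℝ) T, chi s u v t ≤ ∫ t in Set.Icc (0:ℝ) T, g t :=
    setIntegral_mono_on
      (integrableOn_of_bdd (by simp [Real.volume_Icc]) (measurable_chi s u v)
        (chi_nonneg s u v) (fun t => by unfold chi; split <;> norm_num))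
      hgint measurableSet_Icc hpt
  refine hint.trans ?_
  rw [hg, integral_finset_sum _ (fun k _ => integrableOn_of_bdd (by simp [Real.volume_Icc])
    (measurable_one.indicator measurableSet_Ico) (hind0 _ _) (hind1 _ _))]
  have hterm : ∀ k : ℤ, (∫ t in Set.Icc (0:ℝ) T,
      Set.indicator (Set.Ico ((k:ℝ)*s - v) ((k:ℝ)*s - u)) 1 t) ≤ v - u := by
    intro k
    rw [setIntegral_indicator measurableSet_Ico]
    simp only [Pi.one_apply, MeasureTheory.setIntegral_const, smul_eq_mul, mul_one]
    calc (volume (Set.Icc (0:ℝ) T ∩ Set.Ico ((k:ℝ)*s - v) ((k:ℝ)*s - u))).toReal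
        ≤ (volume (Set.Ico ((k:ℝ)*s - v) ((k:ℝ)*s - u))).toReal := by
          apply ENNReal.toReal_mono (by simp [Real.volume_Ico])
          exact measure_mono Set.inter_subset_right
      _ = v - u := by rw [Real.volume_Ico]; rw [ENNReal.toReal_ofReal (by linarith)]; ring_nf
  calc (∑ k ∈ Finset.Icc (1:ℤ) K, ∫ t in Set.Icc (0:ℝ) T,
        Set.indicator (Set.Ico ((k:ℝ)*s - v) ((k:ℝ)*s - u)) 1 t)
      ≤ ∑ k ∈ Finset.Icc (1:ℤ) K, (v - u) := Finset.sum_le_sum fun k _ => hterm k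
    _ = (Finset.Icc (1:ℤ) K).card * (v - u) := by rw [Finset.sum_const, nsmul_eq_mul]
    _ ≤ 2*T/s*(v-u) := by
        apply mul_le_mul_of_nonneg_right ?_ (by linarith)
        have hcard : (Finset.Icc (1:ℤ) K).card = K.toNat := by
          rw [Int.card_Icc]; simp
        rw [hcard]
        rcases le_or_gt K 0 with h | h
        · calc ((K.toNat : ℕ) : ℝ) = 0 := by simp [Int.toNat_of_nonpos h]
            _ ≤ 2*T/s := by positivity
        · have : ((K.toNat : ℕ) : ℝ) = (K : ℝ) := by exact_mod_cast Int.toNat_of_nonneg h.le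
          rw [this]; exact Int.floor_le _

lemma twoDim1 {s T u v : ℝ} (hs : 0 < s) (hu : 0 ≤ u) (huv : u ≤ v) (hv : v ≤ T) :
    ∫ t in (Set.Icc (0:ℝ) T) ×ˢ (Set.Icc (0:ℝ) T), chi s u v t.1 ≤ 2*T^2/s*(v-u) := by
  have hT : (0:ℝ) ≤ T := le_trans (le_trans hu huv) hv
  have h1 : ∫ t in (Set.Icc (0:ℝ) T) ×ˢ (Set.Icc (0:ℝ) T), chi s u v t.1
      = (∫ t in Set.Icc (0:ℝ) T, chi s u v t) * ∫ t in Set.Icc (0:ℝ) T, (1:ℝ) := by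
    rw [MeasureTheory.Measure.volume_eq_prod]
    rw [← MeasureTheory.setIntegral_prod_mul (chi s u v) (fun _ => (1:ℝ))]
    simp
  rw [h1]
  have h2 : ∫ t in Set.Icc (0:ℝ) T, (1:ℝ) = T := by
    simp [Real.volume_Icc, ENNReal.toReal_ofReal hT, hT]
  rw [h2]
  calc (∫ t in Set.Icc (0:ℝ) T, chi s u v t) * T ≤ (2*T/s*(v-u)) * T := by
        apply mul_le_mul_of_nonneg_right (oneDim hs hu huv hv) hT
    _ = 2*T^2/s*(v-u) := by ring

lemma twoDim2 {s T u v : ℝ} (hs : 0 < s) (hu : 0 ≤ u) (huv : u ≤ v) (hv : v ≤ T) :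
    ∫ t in (Set.Icc (0:ℝ) T) ×ˢ (Set.Icc (0:ℝ) T), chi s u v t.2 ≤ 2*T^2/s*(v-u) := by
  have hT : (0:ℝ) ≤ T := le_trans (le_trans hu huv) hv
  have h1 : ∫ t in (Set.Icc (0:ℝ) T) ×ˢ (Set.Icc (0:ℝ) T), chi s u v t.2
      = (∫ t in Set.Icc (0:ℝ) T, (1:ℝ)) * ∫ t in Set.Icc (0:ℝ) T, chi s u v t := by
    rw [MeasureTheory.Measure.volume_eq_prod]
    rw [← MeasureTheory.setIntegral_prod_mul (fun _ => (1:ℝ)) (chi s u v)]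
    simp
  rw [h1]
  have h2 : ∫ t in Set.Icc (0:ℝ) T, (1:ℝ) = T := by
    simp [Real.volume_Icc, ENNReal.toReal_ofReal hT, hT]
  rw [h2]
  calc T * (∫ t in Set.Icc (0:ℝ) T, chi s u v t) ≤ T * (2*T/s*(v-u)) := by
        apply mul_le_mul_of_nonneg_left (oneDim hs hu huv hv) hT
    _ = 2*T^2/s*(v-u) := by ring

lemma twoDim1_abs {s T u v : ℝ} (hs : 0 < s) (hu : u ∈ Set.Icc (0:ℝ) T)
    (hv : v ∈ Set.Icc (0:ℝ) T) :
    ∫ t in (Set.Icc (0:ℝ) T) ×ˢ (Set.Icc (0:ℝ) T), chi s u v t.1 ≤ 2*T^2/s*|u-v| := by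
  rcases le_total u v with h | h
  · rw [abs_of_nonpos (by linarith), neg_sub]
    exact twoDim1 hs hu.1 h hv.2
  · rw [abs_of_nonneg (by linarith)]
    have := twoDim1 hs hv.1 h hu.2
    simpa only [chi_comm s v u] using this

lemma twoDim2_abs {s T u v : ℝ} (hs : 0 < s) (hu : u ∈ Set.Icc (0:ℝ) T)
    (hv : v ∈ Set.Icc (0:ℝ) T) :
    ∫ t in (Set.Icc (0:ℝ) T) ×ˢ (Set.Icc (0:ℝ) T), chi s u v t.2 ≤ 2*T^2/s*|u-v| := by
  rcases le_total u v with h | h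
  · rw [abs_of_nonpos (by linarith), neg_sub]
    exact twoDim2 hs hu.1 h hv.2
  · rw [abs_of_nonneg (by linarith)]
    have := twoDim2 hs hv.1 h hu.2
    simpa only [chi_comm s v u] using this

/-- the indicator that point `p` lies in cell `(a,b)`. -/
def cellInd (t : ℝ × ℝ) (s : ℝ) (p : Pt) (a b : ℤ) : ℝ :=
  if (⌊(p 0 + t.1)/s⌋ = a ∧ ⌊(p 1 + t.2)/s⌋ = b) then 1 else 0

lemma cellInd_nonneg (t s p a b) : 0 ≤ cellInd t s p a b := by
  unfold cellInd; split <;> norm_num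

lemma cellInd_le_one (t s p a b) : cellInd t s p a b ≤ 1 := by
  unfold cellInd; split <;> norm_num

lemma cellCount_cast {ι : Type*} [Fintype ι] (P : ι → Pt) (t : ℝ × ℝ) (s : ℝ) (a b : ℤ) :
    (sCellCount P t s a b : ℝ) = ∑ i, cellInd t s (P i) a b := by
  unfold sCellCount cellInd
  rw [Finset.card_filter]
  push_cast
  apply Finset.sum_congr rfl
  intro i _
  split <;> norm_num

lemma sum_cellInd_le_one (t : ℝ × ℝ) (s : ℝ) (p : Pt) (A B : Finset ℤ) :
    ∑ a ∈ A, ∑ b ∈ B, cellInd t s p a b ≤ 1 := by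
  unfold cellInd
  calc ∑ a ∈ A, ∑ b ∈ B, (if (⌊(p 0 + t.1)/s⌋ = a ∧ ⌊(p 1 + t.2)/s⌋ = b) then (1:ℝ) else 0)
      = (∑ a ∈ A, if ⌊(p 0 + t.1)/s⌋ = a then (1:ℝ) else 0) *
        (∑ b ∈ B, if ⌊(p 1 + t.2)/s⌋ = b then (1:ℝ) else 0) := by
        rw [Finset.sum_mul_sum]
        apply Finset.sum_congr rfl; intro a _
        apply Finset.sum_congr rfl; intro b _
        split_ifs <;> simp_all
    _ ≤ 1 * 1 := by
        apply mul_le_mul ?_ ?_ ?_ zero_le_one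
        · rw [Finset.sum_ite_eq A (⌊(p 0 + t.1)/s⌋) (fun _ => (1:ℝ))]; split <;> norm_num
        · rw [Finset.sum_ite_eq B (⌊(p 1 + t.2)/s⌋) (fun _ => (1:ℝ))]; split <;> norm_num
        · apply Finset.sum_nonneg; intro a _; split <;> norm_num
    _ = 1 := by norm_num

lemma sum_option {m n : ℕ} (M : AugMatching m n) (f : Fin n → ℝ) :
    ∑ j, f j = (∑ i, (M.σ i).elim 0 f) + ∑ j, if ∃ i, M.σ i = some j then 0 else f j := by
  have h1 : ∀ i : Fin m, (M.σ i).elim 0 f = ∑ j, if M.σ i = some j then f j else 0 := by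
    intro i
    cases h : M.σ i with
    | none => simp [h]
    | some j0 => simp [h, Finset.sum_ite_eq]
  have h2 : ∀ j : Fin n, (∑ i, if M.σ i = some j then f j else 0)
      = if ∃ i, M.σ i = some j then f j else 0 := by
    intro j
    by_cases hj : ∃ i, M.σ i = some j
    · obtain ⟨i0, hi0⟩ := hj
      rw [if_pos ⟨i0, hi0⟩]
      rw [Finset.sum_eq_single i0]
      · rw [if_pos hi0]
      · intro i' _ hne
        rw [if_neg]
        intro h'
        exact hne (M.inj i' i0 j h' hi0)
      · intro h; exact absurd (Finset.mem_univ i0) h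
    · rw [if_neg hj]
      apply Finset.sum_eq_zero
      intro i _
      rw [if_neg]
      intro h'
      exact hj ⟨i, h'⟩
  calc ∑ j, f j
      = ∑ j, ((if ∃ i, M.σ i = some j then f j else 0) +
          if ∃ i, M.σ i = some j then 0 else f j) := by
        apply Finset.sum_congr rfl; intro j _; split <;> ring
    _ = (∑ j, if ∃ i, M.σ i = some j then f j else 0) +
        ∑ j, if ∃ i, M.σ i = some j then 0 else f j := Finset.sum_add_distrib
    _ = (∑ i, (M.σ i).elim 0 f) + ∑ j, if ∃ i, M.σ i = some j then 0 else f j := by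
        congr 1
        rw [← Finset.sum_congr rfl (fun j _ => h2 j), Finset.sum_comm]
        exact (Finset.sum_congr rfl fun i _ => (h1 i)).symm

section LevelBound
variable {m n : ℕ} (M : AugMatching m n) (P : Fin m → Pt) (Q : Fin n → Pt)
  (t : ℝ × ℝ) (s : ℝ) (A B : Finset ℤ)

lemma diag_sum_le (p : Pt) :
    (∑ a ∈ A, ∑ b ∈ B, if sTerminal t s a b then 0 else cellInd t s p a b)
      ≤ chi s (p 0) (p 1) t.2 := by
  unfold chi
  split
  · rename_i heq
    apply le_of_eq
    apply Finset.sum_eq_zero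
    intro a _
    apply Finset.sum_eq_zero
    intro b _
    split
    · rfl
    · rename_i hterm
      unfold cellInd
      split
      · rename_i hc
        exact absurd ⟨p 0, hc.1, heq.trans hc.2⟩ hterm
      · rfl
  · calc (∑ a ∈ A, ∑ b ∈ B, if sTerminal t s a b then 0 else cellInd t s p a b)
        ≤ ∑ a ∈ A, ∑ b ∈ B, cellInd t s p a b := by
          apply Finset.sum_le_sum; intro a _
          apply Finset.sum_le_sum; intro b _
          split
          · exact cellInd_nonneg t s p a b
          · exact le_refl _
      _ ≤ 1 := sum_cellInd_le_one t s p A B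

lemma pair_sum_le (p q : Pt) :
    (∑ a ∈ A, ∑ b ∈ B, |cellInd t s p a b - cellInd t s q a b|)
      ≤ 2*(chi s (p 0) (q 0) t.1 + chi s (p 1) (q 1) t.2) := by
  by_cases hx : ⌊(p 0 + t.1)/s⌋ = ⌊(q 0 + t.1)/s⌋ ∧ ⌊(p 1 + t.2)/s⌋ = ⌊(q 1 + t.2)/s⌋
  · have heq : ∀ a b, cellInd t s p a b = cellInd t s q a b := by
      intro a b; unfold cellInd; rw [hx.1, hx.2]
    have h0 : (∑ a ∈ A, ∑ b ∈ B, |cellInd t s p a b - cellInd t s q a b|) = 0 := by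
      apply Finset.sum_eq_zero; intro a _
      apply Finset.sum_eq_zero; intro b _
      rw [heq a b, sub_self, abs_zero]
    rw [h0]
    have := chi_nonneg s (p 0) (q 0) t.1
    have := chi_nonneg s (p 1) (q 1) t.2
    linarith
  · have hch : 1 ≤ chi s (p 0) (q 0) t.1 + chi s (p 1) (q 1) t.2 := by
      unfold chi
      split_ifs with h1 h2
      · exact absurd ⟨h1, h2⟩ hx
      · norm_num
      · norm_num
      · norm_num
    calc (∑ a ∈ A, ∑ b ∈ B, |cellInd t s p a b - cellInd t s q a b|)
        ≤ ∑ a ∈ A, ∑ b ∈ B, (cellInd t s p a b + cellInd t s q a b) := by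
          apply Finset.sum_le_sum; intro a _
          apply Finset.sum_le_sum; intro b _
          rw [abs_sub_le_iff]
          constructor <;>
            linarith [cellInd_nonneg t s p a b, cellInd_nonneg t s q a b]
      _ = (∑ a ∈ A, ∑ b ∈ B, cellInd t s p a b) + ∑ a ∈ A, ∑ b ∈ B, cellInd t s q a b := by
          rw [← Finset.sum_add_distrib]
          apply Finset.sum_congr rfl; intro a _
          rw [← Finset.sum_add_distrib]
      _ ≤ 1 + 1 := add_le_add (sum_cellInd_le_one t s p A B) (sum_cellInd_le_one t s q A B)
      _ ≤ 2*(chi s (p 0) (q 0) t.1 + chi s (p 1) (q 1) t.2) := by linarith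

lemma sum_swap3 {γ : Type*} (sf : Finset γ) (A B : Finset ℤ) (F : γ → ℤ → ℤ → ℝ) :
    ∑ a ∈ A, ∑ b ∈ B, ∑ i ∈ sf, F i a b = ∑ i ∈ sf, ∑ a ∈ A, ∑ b ∈ B, F i a b :=
  calc ∑ a ∈ A, ∑ b ∈ B, ∑ i ∈ sf, F i a b
      = ∑ a ∈ A, ∑ i ∈ sf, ∑ b ∈ B, F i a b :=
        Finset.sum_congr rfl fun a _ => Finset.sum_comm
    _ = ∑ i ∈ sf, ∑ a ∈ A, ∑ b ∈ B, F i a b := Finset.sum_comm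

lemma level_bound {m n : ℕ} (M : AugMatching m n) (P : Fin m → Pt) (Q : Fin n → Pt)
    (t : ℝ × ℝ) (s : ℝ) (A B : Finset ℤ) :
    (∑ a ∈ A, ∑ b ∈ B, if sTerminal t s a b then 0 else
        |(sCellCount P t s a b : ℝ) - (sCellCount Q t s a b : ℝ)|)
      ≤ (∑ i, (M.σ i).elim (chi s (P i 0) (P i 1) t.2)
            (fun j => 2*(chi s (P i 0) (Q j 0) t.1 + chi s (P i 1) (Q j 1) t.2)))
        + ∑ j, if ∃ i, M.σ i = some j then 0 else chi s (Q j 0) (Q j 1) t.2 := by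
  have hh : ∀ (i : Fin m) (a b : ℤ), ∃ y : ℝ,
    ((M.σ i).elim (if sTerminal t s a b then 0 else cellInd t s (P i) a b)
      (fun j => |cellInd t s (P i) a b - cellInd t s (Q j) a b|)) = y := fun i a b => ⟨_, rfl⟩
  set h : Fin m → ℤ → ℤ → ℝ := fun i a b => (M.σ i).elim
    (if sTerminal t s a b then 0 else cellInd t s (P i) a b)
    (fun j => |cellInd t s (P i) a b - cellInd t s (Q j) a b|) with hhdef
  set r : Fin n → ℤ → ℤ → ℝ := fun j a b => if ∃ i, M.σ i = some j then 0
    else (if sTerminal t s a b then 0 else cellInd t s (Q j) a b) with hrdef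
  have hnone : ∀ i, M.σ i = none →
      ∀ a b, h i a b = if sTerminal t s a b then 0 else cellInd t s (P i) a b := by
    intro i hσ a b; simp only [hhdef, hσ, Option.elim]
  have hsome : ∀ i j, M.σ i = some j →
      ∀ a b, h i a b = |cellInd t s (P i) a b - cellInd t s (Q j) a b| := by
    intro i j hσ a b; simp only [hhdef, hσ, Option.elim]
  have hrpos : ∀ j, (∃ i, M.σ i = some j) → ∀ a b, r j a b = 0 := by
    intro j hj a b; simp only [hrdef, if_pos hj]
  have hrneg : ∀ j, ¬(∃ i, M.σ i = some j) →
      ∀ a b, r j a b = if sTerminal t s a b then 0 else cellInd t s (Q j) a b := by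
    intro j hj a b; simp only [hrdef, if_neg hj]
  have hnonneg : ∀ i a b, 0 ≤ h i a b := by
    intro i a b
    cases hσ : M.σ i with
    | none =>
      rw [hnone i hσ]; split
      · exact le_refl _
      · exact cellInd_nonneg _ _ _ _ _
    | some j => rw [hsome i j hσ]; exact abs_nonneg _
  have hrnonneg : ∀ j a b, 0 ≤ r j a b := by
    intro j a b
    by_cases hj : ∃ i, M.σ i = some j
    · rw [hrpos j hj]
    · rw [hrneg j hj]; split
      · exact le_refl _
      · exact cellInd_nonneg _ _ _ _ _
  have step1 : ∀ a b, (if sTerminal t s a b then 0 else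
      |(sCellCount P t s a b : ℝ) - (sCellCount Q t s a b : ℝ)|)
      ≤ (∑ i, h i a b) + ∑ j, r j a b := by
    intro a b
    by_cases hterm : sTerminal t s a b
    · rw [if_pos hterm]
      have := Finset.sum_nonneg (fun i (_ : i ∈ Finset.univ) => hnonneg i a b)
      have := Finset.sum_nonneg (fun j (_ : j ∈ Finset.univ) => hrnonneg j a b)
      linarith
    · rw [if_neg hterm, cellCount_cast P t s a b, cellCount_cast Q t s a b,
        sum_option M (fun j => cellInd t s (Q j) a b)]
      have hre : (∑ i, cellInd t s (P i) a b) -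
          ((∑ i, (M.σ i).elim 0 (fun j => cellInd t s (Q j) a b)) +
            ∑ j, if ∃ i, M.σ i = some j then 0 else cellInd t s (Q j) a b)
          = (∑ i, (cellInd t s (P i) a b - (M.σ i).elim 0 (fun j => cellInd t s (Q j) a b)))
            - ∑ j, if ∃ i, M.σ i = some j then 0 else cellInd t s (Q j) a b := by
        rw [Finset.sum_sub_distrib]; ring
      rw [hre]
      calc |(∑ i, (cellInd t s (P i) a b - (M.σ i).elim 0 (fun j => cellInd t s (Q j) a b)))
            - ∑ j, if ∃ i, M.σ i = some j then 0 else cellInd t s (Q j) a b|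
          ≤ |∑ i, (cellInd t s (P i) a b - (M.σ i).elim 0 (fun j => cellInd t s (Q j) a b))|
            + |∑ j, if ∃ i, M.σ i = some j then 0 else cellInd t s (Q j) a b| := abs_sub _ _
        _ ≤ (∑ i, |cellInd t s (P i) a b - (M.σ i).elim 0 (fun j => cellInd t s (Q j) a b)|)
            + ∑ j, |if ∃ i, M.σ i = some j then 0 else cellInd t s (Q j) a b| :=
            add_le_add (Finset.abs_sum_le_sum_abs _ _) (Finset.abs_sum_le_sum_abs _ _)
        _ = (∑ i, h i a b) + ∑ j, r j a b := by
            congr 1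
            · apply Finset.sum_congr rfl
              intro i _
              cases hσ : M.σ i with
              | none =>
                rw [hnone i hσ, if_neg hterm]
                simp only [hσ, Option.elim, sub_zero]
                exact abs_of_nonneg (cellInd_nonneg _ _ _ _ _)
              | some j =>
                rw [hsome i j hσ]
                simp only [hσ, Option.elim]
            · apply Finset.sum_congr rfl
              intro j _
              by_cases hj : ∃ i, M.σ i = some j
              · rw [hrpos j hj, if_pos hj, abs_zero]
              · rw [hrneg j hj, if_neg hj, if_neg hterm]
                exact abs_of_nonneg (cellInd_nonneg _ _ _ _ _)
  calc (∑ a ∈ A, ∑ b ∈ B, if sTerminal t s a b then 0 else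
        |(sCellCount P t s a b : ℝ) - (sCellCount Q t s a b : ℝ)|)
      ≤ ∑ a ∈ A, ∑ b ∈ B, ((∑ i, h i a b) + ∑ j, r j a b) := by
        apply Finset.sum_le_sum; intro a _
        apply Finset.sum_le_sum; intro b _
        exact step1 a b
    _ = (∑ a ∈ A, ∑ b ∈ B, ∑ i, h i a b) + ∑ a ∈ A, ∑ b ∈ B, ∑ j, r j a b := by
        rw [← Finset.sum_add_distrib]
        apply Finset.sum_congr rfl; intro a _
        rw [← Finset.sum_add_distrib]
    _ = (∑ i, ∑ a ∈ A, ∑ b ∈ B, h i a b) + ∑ j, ∑ a ∈ A, ∑ b ∈ B, r j a b := by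
        rw [sum_swap3, sum_swap3]
    _ ≤ _ := by
        apply add_le_add
        · apply Finset.sum_le_sum
          intro i _
          cases hσ : M.σ i with
          | none =>
            rw [Finset.sum_congr rfl (fun a _ => Finset.sum_congr rfl
              (fun b _ => hnone i hσ a b))]
            simp only [hσ, Option.elim]
            exact diag_sum_le t s A B (P i)
          | some j =>
            rw [Finset.sum_congr rfl (fun a _ => Finset.sum_congr rfl
              (fun b _ => hsome i j hσ a b))]
            simp only [hσ, Option.elim]
            exact pair_sum_le t s A B (P i) (Q j)
        · apply Finset.sum_le_sum
          intro j _
          by_cases hj : ∃ i, M.σ i = some j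
          · rw [Finset.sum_congr rfl (fun a _ => Finset.sum_congr rfl
              (fun b _ => hrpos j hj a b)), if_pos hj]
            simp
          · rw [Finset.sum_congr rfl (fun a _ => Finset.sum_congr rfl
              (fun b _ => hrneg j hj a b)), if_neg hj]
            exact diag_sum_le t s A B (Q j)

lemma sqrt2_facts : Real.sqrt 2 ^ 2 = 2 ∧ (1:ℝ) ≤ Real.sqrt 2 ∧ Real.sqrt 2 ≤ 1.5 := by
  have h : Real.sqrt 2 ^ 2 = 2 := Real.sq_sqrt (by norm_num)
  have h0 := Real.sqrt_nonneg 2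
  refine ⟨h, by nlinarith, by nlinarith⟩

lemma coord_dist (p q : Pt) : |p 0 - q 0| + |p 1 - q 1| ≤ Real.sqrt 2 * dist p q := by
  have key : ∀ x y : ℝ, 0 ≤ x → 0 ≤ y → x + y ≤ Real.sqrt 2 * Real.sqrt (x^2+y^2) := by
    intro x y hx hy
    rw [← Real.sqrt_mul (by norm_num)]
    have h := Real.sqrt_le_sqrt (show (x+y)^2 ≤ 2*(x^2+y^2) by nlinarith [sq_nonneg (x-y)])
    rwa [Real.sqrt_sq (by positivity)] at h
  rw [EuclideanSpace.dist_eq, Fin.sum_univ_two, Real.dist_eq, Real.dist_eq]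
  have := key |p 0 - q 0| |p 1 - q 1| (abs_nonneg _) (abs_nonneg _)
  exact this

lemma proj_dist (p : Pt) (h : p 0 ≤ p 1) : p 1 - p 0 = Real.sqrt 2 * dist p (proj p) := by
  rw [EuclideanSpace.dist_eq, Fin.sum_univ_two]
  have h0 : proj p 0 = (p 0 + p 1)/2 := rfl
  have h1 : proj p 1 = (p 0 + p 1)/2 := rfl
  rw [h0, h1, Real.dist_eq, Real.dist_eq]
  have e1 : |p 0 - (p 0 + p 1)/2| ^ 2 + |p 1 - (p 0 + p 1)/2| ^ 2 = (p 1 - p 0)^2/2 := by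
    rw [sq_abs, sq_abs]; ring
  rw [e1]
  rw [show (p 1 - p 0)^2/2 = ((p 1 - p 0)/Real.sqrt 2)^2 by
    rw [div_pow, sqrt2_facts.1]]
  rw [Real.sqrt_sq (div_nonneg (by linarith) (Real.sqrt_nonneg 2))]
  have hs : Real.sqrt 2 ≠ 0 := by nlinarith [sqrt2_facts.2.1]
  field_simp


/-- The per-level dominating function. -/
def bracket {m n : ℕ} (M : AugMatching m n) (P : Fin m → Pt) (Q : Fin n → Pt)
    (s : ℝ) (t : ℝ×ℝ) : ℝ :=
  (∑ i, (M.σ i).elim (chi s (P i 0) (P i 1) t.2)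
    (fun k => 2*(chi s (P i 0) (Q k 0) t.1 + chi s (P i 1) (Q k 1) t.2)))
  + ∑ k, if ∃ i, M.σ i = some k then 0 else chi s (Q k 0) (Q k 1) t.2

lemma level_bound' {m n : ℕ} (M : AugMatching m n) (P : Fin m → Pt) (Q : Fin n → Pt)
    (t : ℝ × ℝ) (s : ℝ) (A B : Finset ℤ) :
    (∑ a ∈ A, ∑ b ∈ B, if sTerminal t s a b then 0 else
        |(sCellCount P t s a b : ℝ) - (sCellCount Q t s a b : ℝ)|)
      ≤ bracket M P Q s t := level_bound M P Q t s A B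

/-- Lemma 4 (upper bound): there is a universal constant `C > 0` such that for
persistence diagrams `P`, `Q` in a square of side `Δ = 2^L`, with pairwise distances
`≥ 1` between distinct points and distance `≥ 1` to the diagonal, the expected modified
`L₁` distance over a uniform shift in `[0,Δ]²` satisfies
`E[|V^P - V^Q|_T] ≤ C · log Δ · d_W(P, Q)`. -/
theorem expected_modL1_le :
    ∃ C : ℝ, 0 < C ∧
      ∀ (L m n : ℕ), 1 ≤ L → ∀ (P : Fin m → Pt) (Q : Fin n → Pt),
        (∀ u : Fin m ⊕ Fin n, ∀ k, Sum.elim P Q u k ∈ Set.Ico (0 : ℝ) (2 ^ L)) →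
        (∀ u : Fin m ⊕ Fin n, Sum.elim P Q u 0 < Sum.elim P Q u 1) →
        (∀ u v : Fin m ⊕ Fin n, Sum.elim P Q u ≠ Sum.elim P Q v →
          1 ≤ dist (Sum.elim P Q u) (Sum.elim P Q v)) →
        (∀ u : Fin m ⊕ Fin n,
          1 ≤ (Sum.elim P Q u 1 - Sum.elim P Q u 0) / Real.sqrt 2) →
        (∫ t in {t : ℝ × ℝ | t.1 ∈ Set.Icc (0 : ℝ) (2 ^ L) ∧ t.2 ∈ Set.Icc (0 : ℝ) (2 ^ L)},
            sModL1 L P Q t) / ((2 : ℝ) ^ L) ^ 2 ≤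
          C * Real.logb 2 (2 ^ L) * dW P Q := by
  refine ⟨18, by norm_num, ?_⟩
  intro L m n hL P Q h1 h2 _h3 _h4
  have hT1 : (1:ℝ) ≤ 2^L := one_le_pow₀ (by norm_num)
  set T : ℝ := 2^L with hTdef
  have hT0 : (0:ℝ) < T := lt_of_lt_of_le one_pos hT1
  have hL1 : (1:ℝ) ≤ (L:ℝ) := by exact_mod_cast hL
  set sq : Set (ℝ×ℝ) := (Set.Icc (0:ℝ) T) ×ˢ (Set.Icc (0:ℝ) T) with hsqdef
  have hvol : volume sq ≠ ⊤ := (isCompact_Icc.prod isCompact_Icc).measure_lt_top.ne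
  have hcoordP : ∀ (i : Fin m) (k : Fin 2), P i k ∈ Set.Icc (0:ℝ) T := fun i k =>
    ⟨(h1 (Sum.inl i) k).1, le_of_lt (h1 (Sum.inl i) k).2⟩
  have hcoordQ : ∀ (i : Fin n) (k : Fin 2), Q i k ∈ Set.Icc (0:ℝ) T := fun i k =>
    ⟨(h1 (Sum.inr i) k).1, le_of_lt (h1 (Sum.inr i) k).2⟩
  have horderP : ∀ i : Fin m, P i 0 ≤ P i 1 := fun i => le_of_lt (h2 (Sum.inl i))
  have horderQ : ∀ i : Fin n, Q i 0 ≤ Q i 1 := fun i => le_of_lt (h2 (Sum.inr i))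
  have hsqrt := sqrt2_facts
  have hmc0 : ∀ M : AugMatching m n, 0 ≤ matchCost P Q M := by
    intro M; unfold matchCost
    apply add_nonneg
    · apply Finset.sum_nonneg; intro i _
      cases hσ : M.σ i with
      | none => simp only [hσ, Option.elim]; exact dist_nonneg
      | some k => simp only [hσ, Option.elim]; exact dist_nonneg
    · apply Finset.sum_nonneg; intro k _
      split
      · exact le_refl _
      · exact dist_nonneg
  have hmod0 : ∀ t, 0 ≤ sModL1 L P Q t := by
    intro t; unfold sModL1
    apply Finset.sum_nonneg; intro j _
    apply mul_nonneg (by positivity)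
    apply Finset.sum_nonneg; intro a _
    apply Finset.sum_nonneg; intro b _
    split
    · exact le_refl _
    · exact abs_nonneg _
  -- the key bound, for an arbitrary augmented matching M
  have key : ∀ M : AugMatching m n,
      (∫ t in sq, sModL1 L P Q t) ≤ 18 * L * T^2 * matchCost P Q M := by
    intro M
    -- pointwise domination
    have hpt : ∀ t : ℝ×ℝ, sModL1 L P Q t ≤
        ∑ j ∈ range (L+2), ((2:ℝ)^j/2) * bracket M P Q ((2:ℝ)^j/2) t := by
      intro t
      unfold sModL1
      apply Finset.sum_le_sum
      intro j _
      exact mul_le_mul_of_nonneg_left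
        (level_bound' M P Q t ((2:ℝ)^j/2) (Finset.Icc (0:ℤ) (2^(L+2))) (Finset.Icc (0:ℤ) (2^(L+2))))
        (by positivity)
    -- integrability of the dominating pieces
    have hint_i : ∀ (s : ℝ) (i : Fin m), IntegrableOn (fun t : ℝ×ℝ =>
        (M.σ i).elim (chi s (P i 0) (P i 1) t.2)
          (fun k => 2*(chi s (P i 0) (Q k 0) t.1 + chi s (P i 1) (Q k 1) t.2))) sq := by
      intro s i
      cases hσ : M.σ i with
      | none => simpa only [hσ, Option.elim] using integrableOn_chi2 hvol s (P i 0) (P i 1)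
      | some k =>
        simp only [hσ, Option.elim]
        exact ((integrableOn_chi1 hvol s (P i 0) (Q k 0)).add
          (integrableOn_chi2 hvol s (P i 1) (Q k 1))).const_mul 2
    have hint_k : ∀ (s : ℝ) (k : Fin n), IntegrableOn (fun t : ℝ×ℝ =>
        if ∃ i, M.σ i = some k then 0 else chi s (Q k 0) (Q k 1) t.2) sq := by
      intro s k
      by_cases hk : ∃ i, M.σ i = some k
      · simp only [if_pos hk]
        exact integrableOn_const hvol
      · simp only [if_neg hk]
        exact integrableOn_chi2 hvol s (Q k 0) (Q k 1)
    have hint_br : ∀ s : ℝ, IntegrableOn (bracket M P Q s) sq := by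
      intro s
      unfold bracket
      exact (integrable_finset_sum _ (fun i _ => hint_i s i)).add
        (integrable_finset_sum _ (fun k _ => hint_k s k))
    have hGint : IntegrableOn
        (fun t : ℝ×ℝ => ∑ j ∈ range (L+2), ((2:ℝ)^j/2) * bracket M P Q ((2:ℝ)^j/2) t) sq :=
      integrable_finset_sum _ (fun j _ => (hint_br ((2:ℝ)^j/2)).const_mul _)
    have hmono : (∫ t in sq, sModL1 L P Q t) ≤
        ∫ t in sq, ∑ j ∈ range (L+2), ((2:ℝ)^j/2) * bracket M P Q ((2:ℝ)^j/2) t :=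
      integral_mono_of_nonneg (Filter.Eventually.of_forall hmod0) hGint
        (Filter.Eventually.of_forall hpt)
    -- per level integral bound
    have hlev : ∀ j ∈ range (L+2),
        (∫ t in sq, ((2:ℝ)^j/2) * bracket M P Q ((2:ℝ)^j/2) t)
          ≤ 4*Real.sqrt 2*T^2 * matchCost P Q M := by
      intro j _
      set s : ℝ := (2:ℝ)^j/2 with hs
      have hs0 : (0:ℝ) < s := by positivity
      have hfac : (0:ℝ) ≤ T^2/s := by positivity
      rw [integral_const_mul]
      have hbr : (∫ t in sq, bracket M P Q s t) ≤ 4*Real.sqrt 2*T^2/s * matchCost P Q M := by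
        have hsplit : (∫ t in sq, bracket M P Q s t) =
            (∑ i, ∫ t in sq, (M.σ i).elim (chi s (P i 0) (P i 1) t.2)
              (fun k => 2*(chi s (P i 0) (Q k 0) t.1 + chi s (P i 1) (Q k 1) t.2)))
            + ∑ k, ∫ t in sq,
                (if ∃ i, M.σ i = some k then 0 else chi s (Q k 0) (Q k 1) t.2) := by
          unfold bracket
          rw [integral_add (integrable_finset_sum _ fun i _ => hint_i s i)
            (integrable_finset_sum _ fun k _ => hint_k s k),
            integral_finset_sum _ (fun i _ => hint_i s i),
            integral_finset_sum _ (fun k _ => hint_k s k)]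
        rw [hsplit]
        have hdiag : ∀ p : Pt, (∀ k : Fin 2, p k ∈ Set.Icc (0:ℝ) T) → p 0 ≤ p 1 →
            (∫ t in sq, chi s (p 0) (p 1) t.2)
              ≤ (4*Real.sqrt 2*T^2/s) * dist p (proj p) := by
          intro p hc hord
          have h2d := twoDim2 hs0 (hc 0).1 hord (hc 1).2
          have hpd := proj_dist p hord
          have hd0 : (0:ℝ) ≤ dist p (proj p) := dist_nonneg
          calc (∫ t in sq, chi s (p 0) (p 1) t.2) ≤ 2*T^2/s*(p 1 - p 0) := h2d
            _ ≤ (4*Real.sqrt 2*T^2/s) * dist p (proj p) := by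
                rw [hpd]
                have e1 : 2*T^2/s*(Real.sqrt 2 * dist p (proj p))
                    = 2*Real.sqrt 2*(T^2/s)* dist p (proj p) := by ring
                have e2 : (4*Real.sqrt 2*T^2/s) * dist p (proj p)
                    = 4*Real.sqrt 2*(T^2/s)* dist p (proj p) := by ring
                rw [e1, e2]
                have hnn : (0:ℝ) ≤ Real.sqrt 2*(T^2/s)*dist p (proj p) :=
                  mul_nonneg (mul_nonneg (Real.sqrt_nonneg 2) hfac) hd0
                nlinarith
        have hi : ∀ i : Fin m, (∫ t in sq, (M.σ i).elim (chi s (P i 0) (P i 1) t.2)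
            (fun k => 2*(chi s (P i 0) (Q k 0) t.1 + chi s (P i 1) (Q k 1) t.2)))
            ≤ (4*Real.sqrt 2*T^2/s) * (M.σ i).elim (dist (P i) (proj (P i)))
                (fun k => dist (P i) (Q k)) := by
          intro i
          cases hσ : M.σ i with
          | none =>
            simp only [hσ, Option.elim]
            exact hdiag (P i) (hcoordP i) (horderP i)
          | some k =>
            simp only [hσ, Option.elim]
            have e0 : (∫ t in sq, 2*(chi s (P i 0) (Q k 0) t.1 + chi s (P i 1) (Q k 1) t.2))
                = 2*((∫ t in sq, chi s (P i 0) (Q k 0) t.1)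
                    + ∫ t in sq, chi s (P i 1) (Q k 1) t.2) := by
              rw [integral_const_mul, integral_add (integrableOn_chi1 hvol _ _ _)
                (integrableOn_chi2 hvol _ _ _)]
            rw [e0]
            have b1 := twoDim1_abs hs0 (hcoordP i 0) (hcoordQ k 0)
            have b2 := twoDim2_abs hs0 (hcoordP i 1) (hcoordQ k 1)
            have bc := coord_dist (P i) (Q k)
            calc 2*((∫ t in sq, chi s (P i 0) (Q k 0) t.1)
                  + ∫ t in sq, chi s (P i 1) (Q k 1) t.2)
                ≤ 2*(2*T^2/s*|P i 0 - Q k 0| + 2*T^2/s*|P i 1 - Q k 1|) :=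
                  mul_le_mul_of_nonneg_left (add_le_add b1 b2) (by norm_num)
              _ = 4*(T^2/s)*(|P i 0 - Q k 0| + |P i 1 - Q k 1|) := by ring
              _ ≤ 4*(T^2/s)*(Real.sqrt 2 * dist (P i) (Q k)) := by
                  apply mul_le_mul_of_nonneg_left bc (by positivity)
              _ = (4*Real.sqrt 2*T^2/s) * dist (P i) (Q k) := by ring
        have hk2 : ∀ k : Fin n, (∫ t in sq,
            (if ∃ i, M.σ i = some k then 0 else chi s (Q k 0) (Q k 1) t.2))
            ≤ (4*Real.sqrt 2*T^2/s) *
              (if ∃ i, M.σ i = some k then 0 else dist (Q k) (proj (Q k))) := by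
          intro k
          by_cases hk : ∃ i, M.σ i = some k
          · simp only [if_pos hk, mul_zero, integral_zero, le_refl]
          · simp only [if_neg hk]
            exact hdiag (Q k) (hcoordQ k) (horderQ k)
        calc (∑ i, ∫ t in sq, (M.σ i).elim (chi s (P i 0) (P i 1) t.2)
              (fun k => 2*(chi s (P i 0) (Q k 0) t.1 + chi s (P i 1) (Q k 1) t.2)))
            + ∑ k, ∫ t in sq,
                (if ∃ i, M.σ i = some k then 0 else chi s (Q k 0) (Q k 1) t.2)
            ≤ (∑ i, (4*Real.sqrt 2*T^2/s) * (M.σ i).elim (dist (P i) (proj (P i)))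
                (fun k => dist (P i) (Q k)))
              + ∑ k, (4*Real.sqrt 2*T^2/s) *
                  (if ∃ i, M.σ i = some k then 0 else dist (Q k) (proj (Q k))) :=
              add_le_add (Finset.sum_le_sum fun i _ => hi i) (Finset.sum_le_sum fun k _ => hk2 k)
          _ = 4*Real.sqrt 2*T^2/s * matchCost P Q M := by
              unfold matchCost
              rw [← Finset.mul_sum, ← Finset.mul_sum, ← mul_add]
      calc s * (∫ t in sq, bracket M P Q s t)
          ≤ s * (4*Real.sqrt 2*T^2/s * matchCost P Q M) :=
            mul_le_mul_of_nonneg_left hbr hs0.le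
        _ = 4*Real.sqrt 2*T^2 * matchCost P Q M := by field_simp
    calc (∫ t in sq, sModL1 L P Q t)
        ≤ ∫ t in sq, ∑ j ∈ range (L+2), ((2:ℝ)^j/2) * bracket M P Q ((2:ℝ)^j/2) t := hmono
      _ = ∑ j ∈ range (L+2), ∫ t in sq, ((2:ℝ)^j/2) * bracket M P Q ((2:ℝ)^j/2) t :=
          integral_finset_sum _ (fun j _ => (hint_br ((2:ℝ)^j/2)).const_mul _)
      _ ≤ ∑ j ∈ range (L+2), 4*Real.sqrt 2*T^2 * matchCost P Q M := Finset.sum_le_sum hlev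
      _ = ((L:ℝ)+2) * (4*Real.sqrt 2*T^2 * matchCost P Q M) := by
          rw [Finset.sum_const, Finset.card_range, nsmul_eq_mul]
          push_cast
          ring
      _ ≤ 18 * L * T^2 * matchCost P Q M := by
          have hX : (0:ℝ) ≤ T^2 * matchCost P Q M := mul_nonneg (sq_nonneg T) (hmc0 M)
          have h1' : 4*Real.sqrt 2*((L:ℝ)+2) ≤ 18*L := by nlinarith [hsqrt.2.2, hsqrt.2.1]
          calc ((L:ℝ)+2) * (4*Real.sqrt 2*T^2 * matchCost P Q M)
              = (4*Real.sqrt 2*((L:ℝ)+2))*(T^2 * matchCost P Q M) := by ring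
            _ ≤ (18*(L:ℝ))*(T^2 * matchCost P Q M) := mul_le_mul_of_nonneg_right h1' hX
            _ = 18 * L * T^2 * matchCost P Q M := by ring
  -- conclude via the infimum
  have hlogb : Real.logb 2 ((2:ℝ)^L) = (L:ℝ) := by
    rw [Real.logb_pow, Real.logb_self_eq_one (by norm_num)]
    ring
  have hne : {c | ∃ M : AugMatching m n, matchCost P Q M = c}.Nonempty :=
    ⟨matchCost P Q ⟨fun _ => none, fun i i' j h => by simp at h⟩, ⟨_, rfl⟩⟩
  have h18L : (0:ℝ) < 18*L := by nlinarith
  have hT2 : (0:ℝ) < T^2 := by positivity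
  show (∫ t in sq, sModL1 L P Q t) / T^2 ≤ 18 * Real.logb 2 ((2:ℝ)^L) * dW P Q
  rw [show ((2:ℝ)^L) = T from rfl, hTdef, hlogb]
  have hdW : (∫ t in sq, sModL1 L P Q t) / T^2 / (18*L) ≤ dW P Q := by
    apply le_csInf hne
    rintro c ⟨M, rfl⟩
    rw [div_le_iff₀ h18L, div_le_iff₀ hT2]
    calc (∫ t in sq, sModL1 L P Q t) ≤ 18*L*T^2*matchCost P Q M := key M
      _ = matchCost P Q M * (18*(L:ℝ)) * T^2 := by ring
  have := (div_le_iff₀ h18L).mp hdW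
  calc (∫ t in sq, sModL1 L P Q t) / T^2 ≤ dW P Q * (18*(L:ℝ)) := this
    _ = 18 * (L:ℝ) * dW P Q := by ring
end LevelBound
end
end
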